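/- arXiv:2407.04645 — 3 statements merged into one kernel-verified Lean document; each statement's English description precedes it below -/
import Mathlib

section
/- Let ω be a radial weight. Then for all z, ζ ∈ 𝔻: 2(1 − conj(z)ζ) B^ω_z(ζ) = 1/ω₁ + Σ_{n=1}^∞ ( (ω_{(1,2)})_{2n−1} / (ω_{2n+1} ω_{2n−1}) ) (conj(z)ζ)^n, where (ω_{(1,2)})_x = ∫_0^1 r^x (1 − r²) ω(r) dr, and the series converges absolutely. -/
open MeasureTheory Real Set

noncomputable section

/-- The open unit disc in ℂ. -/
def unitDisc : Set ℂ := {z : ℂ | ‖z‖ < 1}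

/-- Normalized area measure dA = dx dy / π on ℂ. -/
def dA : Measure ℂ := (ENNReal.ofReal (1 / Real.pi)) • (volume : Measure ℂ)

/-- Tail of a radial weight: ω̂(r) = ∫_r^1 ω(s) ds. -/
def wTail (ω : ℂ → ℝ) (r : ℝ) : ℝ := ∫ s in r..1, ω ((s : ℂ))

/-- Moments: ω_x = ∫_0^1 r^x ω(r) dr (real exponent). -/
def wMoment (ω : ℂ → ℝ) (x : ℝ) : ℝ := ∫ r in (0:ℝ)..1, r ^ x * ω ((r : ℂ))

/-- A radial weight: nonnegative, radial, integrable on 𝔻, with strictly positive tails. -/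
structure IsRadialWeight (ω : ℂ → ℝ) : Prop where
  nonneg : ∀ z, 0 ≤ ω z
  radial : ∀ z : ℂ, ω z = ω ((‖z‖ : ℂ))
  integrable : IntegrableOn ω unitDisc dA
  tailPos : ∀ r : ℝ, 0 ≤ r → r < 1 → 0 < wTail ω r

/-- The class D̂ of upper doubling radial weights. -/
def Dhat (ω : ℂ → ℝ) : Prop :=
  ∃ C : ℝ, 0 < C ∧ ∀ r : ℝ, 0 ≤ r → r < 1 → wTail ω r ≤ C * wTail ω ((1 + r) / 2)

/-- The class Ď. -/
def Dcheck (ω : ℂ → ℝ) : Prop :=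
  ∃ C K : ℝ, 1 < C ∧ 1 < K ∧ ∀ r : ℝ, 0 ≤ r → r < 1 →
    C * wTail ω (1 - (1 - r) / K) ≤ wTail ω r

/-- The class D = D̂ ∩ Ď. -/
def Dclass (ω : ℂ → ℝ) : Prop := Dhat ω ∧ Dcheck ω

/-- The Bergman reproducing kernel of A²_ω. -/
def bergmanKernel (ω : ℂ → ℝ) (z ζ : ℂ) : ℂ :=
  ∑' n : ℕ, (starRingEnd ℂ z * ζ) ^ n / (2 * ((wMoment ω (2 * (n : ℝ) + 1) : ℝ) : ℂ))

/-- The Bergman projection P_ω. -/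
def bergmanProj (ω : ℂ → ℝ) (g : ℂ → ℂ) (z : ℂ) : ℂ :=
  ∫ ζ in unitDisc, g ζ * starRingEnd ℂ (bergmanKernel ω z ζ) * ((ω ζ : ℝ) : ℂ) ∂dA

/-- The small Hankel operator h^ω_φ. -/
def hankel (ω : ℂ → ℝ) (φ g : ℂ → ℂ) (z : ℂ) : ℂ :=
  ∫ ζ in unitDisc, φ ζ * g ζ * bergmanKernel ω z ζ * ((ω ζ : ℝ) : ℂ) ∂dA

/-- The transform V_{ω,ν}. -/
def Vop (ω ν : ℂ → ℝ) (f : ℂ → ℂ) (z : ℂ) : ℂ :=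
  ((ν z : ℝ) : ℂ) *
    ∫ ζ in unitDisc, f ζ * starRingEnd ℂ (bergmanKernel (fun w => ω w * ν w) z ζ) *
      ((ω ζ : ℝ) : ℂ) ∂dA

/-- ‖g‖_{L^p_ω} = (∫_𝔻 |g|^p ω dA)^{1/p}. -/
def LpNorm (ω : ℂ → ℝ) (p : ℝ) (g : ℂ → ℂ) : ℝ :=
  (∫ z in unitDisc, ‖g z‖ ^ p * ω z ∂dA) ^ (1 / p)

/-- f ∈ L¹_{ω_log}. -/
def MemL1log (ω : ℂ → ℝ) (f : ℂ → ℂ) : Prop :=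
  AEStronglyMeasurable f (dA.restrict unitDisc) ∧
  IntegrableOn (fun z => ‖f z‖ * Real.log (Real.exp 1 / (1 - ‖z‖)) * ω z)
    unitDisc dA

/-- A bounded analytic function on the unit disc. -/
def BoundedAnalytic (g : ℂ → ℂ) : Prop :=
  DifferentiableOn ℂ g unitDisc ∧ ∃ M : ℝ, ∀ z ∈ unitDisc, ‖g z‖ ≤ M

/-- The set of Bloch seminorm values (1-|z|²)|f'(z)|, z ∈ 𝔻. -/
def blochSet (f : ℂ → ℂ) : Set ℝ :=
  (fun z => (1 - ‖z‖ ^ 2) * ‖deriv f z‖) '' unitDisc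

/-- The Bloch norm ‖f‖_ℬ = |f(0)| + sup_{z∈𝔻}(1-|z|²)|f'(z)|. -/
def blochNorm (f : ℂ → ℂ) : ℝ := ‖f 0‖ + sSup (blochSet f)

/-- Membership in the Bloch space ℬ. -/
def MemBloch (f : ℂ → ℂ) : Prop :=
  DifferentiableOn ℂ f unitDisc ∧ BddAbove (blochSet f)

/-- Admissible bounds M > 0 for h^ω_{conj f} : A^p_ω → conj(A^p_ω). -/
def hankelBoundSet (ω : ℂ → ℝ) (p : ℝ) (f : ℂ → ℂ) : Set ℝ :=
  {M : ℝ | 0 < M ∧ ∀ g : ℂ → ℂ, BoundedAnalytic g →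
    LpNorm ω p (hankel ω (fun ζ => starRingEnd ℂ (f ζ)) g) ≤ M * LpNorm ω p g}

/-- Operator norm of the small Hankel operator: least admissible bound. -/
def hankelNorm (ω : ℂ → ℝ) (p : ℝ) (f : ℂ → ℂ) : ℝ := sInf (hankelBoundSet ω p f)

/-- The set of values |V_{ω,ν}(f)(z)|, z ∈ 𝔻. -/
def VSet (ω ν : ℂ → ℝ) (f : ℂ → ℂ) : Set ℝ :=
  (fun z => ‖Vop ω ν f z‖) '' unitDisc

/-- sup_{z∈𝔻} |V_{ω,ν}(f)(z)|. -/
def VSup (ω ν : ℂ → ℝ) (f : ℂ → ℂ) : ℝ := sSup (VSet ω ν f)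

/-- A nonnegative radial function on 𝔻. -/
def IsRadialNonneg (ν : ℂ → ℝ) : Prop :=
  (∀ z, 0 ≤ ν z) ∧ ∀ z : ℂ, ν z = ν ((‖z‖ : ℂ))

/-- The tail of ν viewed as a radial function on ℂ: z ↦ ν̂(|z|). -/
def tailFun (ν : ℂ → ℝ) : ℂ → ℝ := fun z => wTail ν (‖z‖)

lemma aux_int (ω : ℂ → ℝ) (hω : IsRadialWeight ω) :
    IntegrableOn (fun s : ℝ => ω ((s:ℂ))) (Ioc (0:ℝ) 1) volume := by
  by_contra h
  have h0 := hω.tailPos 0 le_rfl one_pos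
  rw [wTail, intervalIntegral.integral_of_le (by norm_num : (0:ℝ) ≤ 1),
    MeasureTheory.integral_undef h] at h0
  exact lt_irrefl _ h0

lemma aux_int_sub (ω : ℂ → ℝ) (hω : IsRadialWeight ω) {a b : ℝ} (ha : 0 ≤ a) (hb : b ≤ 1)
    (hab : a ≤ b) : IntervalIntegrable (fun s : ℝ => ω ((s:ℂ))) volume a b := by
  rw [intervalIntegrable_iff_integrableOn_Ioc_of_le hab]
  exact (aux_int ω hω).mono_set (Ioc_subset_Ioc ha hb)

lemma aux_meas (ω : ℂ → ℝ) (hω : IsRadialWeight ω) :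
    AEStronglyMeasurable (fun s : ℝ => ω ((s:ℂ))) (volume.restrict (Ioc (0:ℝ) 1)) :=
  (aux_int ω hω).aestronglyMeasurable

lemma aux_int_pow (ω : ℂ → ℝ) (hω : IsRadialWeight ω) (x : ℝ) (hx : 0 ≤ x) :
    IntegrableOn (fun r : ℝ => r ^ x * ω ((r:ℂ))) (Ioc (0:ℝ) 1) volume := by
  refine (aux_int ω hω).mono' ?_ ?_
  · exact ((Real.continuous_rpow_const hx).aestronglyMeasurable).mul (aux_meas ω hω)
  · filter_upwards [ae_restrict_mem measurableSet_Ioc] with r hr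
    have h1 : r ^ x ≤ 1 := Real.rpow_le_one hr.1.le hr.2 hx
    have h2 : 0 ≤ r ^ x := Real.rpow_nonneg hr.1.le x
    have h3 := hω.nonneg ((r:ℂ))
    rw [Real.norm_eq_abs, abs_of_nonneg (mul_nonneg h2 h3)]
    nlinarith

lemma aux_int_pow2 (ω : ℂ → ℝ) (hω : IsRadialWeight ω) (x : ℝ) (hx : 0 ≤ x) :
    IntegrableOn (fun r : ℝ => r ^ x * (1 - r ^ 2) * ω ((r:ℂ))) (Ioc (0:ℝ) 1) volume := by
  refine (aux_int ω hω).mono' ?_ ?_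
  · exact (((Real.continuous_rpow_const hx).mul
      (continuous_const.sub (continuous_pow 2))).aestronglyMeasurable).mul (aux_meas ω hω)
  · filter_upwards [ae_restrict_mem measurableSet_Ioc] with r hr
    have h1 : r ^ x ≤ 1 := Real.rpow_le_one hr.1.le hr.2 hx
    have h2 : 0 ≤ r ^ x := Real.rpow_nonneg hr.1.le x
    have h3 := hω.nonneg ((r:ℂ))
    have h4 : 0 ≤ 1 - r ^ 2 := by nlinarith [hr.1, hr.2]
    have h5 : 1 - r ^ 2 ≤ 1 := by nlinarith [hr.1]
    rw [Real.norm_eq_abs, abs_of_nonneg (by positivity)]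
    calc r ^ x * (1 - r ^ 2) * ω (r:ℂ) ≤ 1 * ω (r:ℂ) :=
          mul_le_mul_of_nonneg_right (by nlinarith) h3
      _ = ω (r:ℂ) := one_mul _

lemma aux_moment_lb (ω : ℂ → ℝ) (hω : IsRadialWeight ω) (x : ℝ) (hx : 0 ≤ x)
    {ρ : ℝ} (hρ0 : 0 < ρ) (hρ1 : ρ < 1) : ρ ^ x * wTail ω ρ ≤ wMoment ω x := by
  have hI1 : IntervalIntegrable (fun r : ℝ => r ^ x * ω ((r:ℂ))) volume 0 ρ := by
    rw [intervalIntegrable_iff_integrableOn_Ioc_of_le hρ0.le]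
    exact (aux_int_pow ω hω x hx).mono_set (Ioc_subset_Ioc le_rfl hρ1.le)
  have hI2 : IntervalIntegrable (fun r : ℝ => r ^ x * ω ((r:ℂ))) volume ρ 1 := by
    rw [intervalIntegrable_iff_integrableOn_Ioc_of_le hρ1.le]
    exact (aux_int_pow ω hω x hx).mono_set (Ioc_subset_Ioc hρ0.le le_rfl)
  have hI3 : IntervalIntegrable (fun r : ℝ => ρ ^ x * ω ((r:ℂ))) volume ρ 1 :=
    (aux_int_sub ω hω hρ0.le le_rfl hρ1.le).const_mul _
  have hsplit : wMoment ω x = (∫ r in (0:ℝ)..ρ, r ^ x * ω ((r:ℂ)))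
      + ∫ r in ρ..1, r ^ x * ω ((r:ℂ)) :=
    (intervalIntegral.integral_add_adjacent_intervals hI1 hI2).symm
  have h1 : 0 ≤ ∫ r in (0:ℝ)..ρ, r ^ x * ω ((r:ℂ)) := by
    apply intervalIntegral.integral_nonneg hρ0.le
    intro r hr
    exact mul_nonneg (Real.rpow_nonneg hr.1 x) (hω.nonneg _)
  have h2 : (∫ r in ρ..1, ρ ^ x * ω ((r:ℂ))) ≤ ∫ r in ρ..1, r ^ x * ω ((r:ℂ)) := by
    apply intervalIntegral.integral_mono_on hρ1.le hI3 hI2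
    intro r hr
    exact mul_le_mul_of_nonneg_right (Real.rpow_le_rpow hρ0.le hr.1 hx) (hω.nonneg _)
  have h3 : (∫ r in ρ..1, ρ ^ x * ω ((r:ℂ))) = ρ ^ x * wTail ω ρ := by
    rw [wTail, ← intervalIntegral.integral_const_mul]
  linarith

lemma aux_moment_pos (ω : ℂ → ℝ) (hω : IsRadialWeight ω) (x : ℝ) (hx : 0 ≤ x) :
    0 < wMoment ω x := by
  have := aux_moment_lb ω hω x hx (by norm_num : (0:ℝ) < 1/2) (by norm_num)
  have hT := hω.tailPos (1/2) (by norm_num) (by norm_num)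
  have : 0 < (1/2:ℝ) ^ x * wTail ω (1/2) := mul_pos (Real.rpow_pos_of_pos (by norm_num) x) hT
  linarith [aux_moment_lb ω hω x hx (by norm_num : (0:ℝ) < 1/2) (by norm_num)]

lemma aux_diff (ω : ℂ → ℝ) (hω : IsRadialWeight ω) (n : ℕ) :
    wMoment ω (2*(n:ℝ)+1) - wMoment ω (2*(n:ℝ)+3)
      = ∫ r in (0:ℝ)..1, r ^ (2*(n:ℝ)+1) * (1 - r ^ 2) * ω ((r:ℂ)) := by
  have hx1 : (0:ℝ) ≤ 2*(n:ℝ)+1 := by positivity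
  have hI1 : IntervalIntegrable (fun r : ℝ => r ^ (2*(n:ℝ)+1) * ω ((r:ℂ))) volume 0 1 := by
    rw [intervalIntegrable_iff_integrableOn_Ioc_of_le (by norm_num : (0:ℝ) ≤ 1)]
    exact aux_int_pow ω hω _ hx1
  have hI2 : IntervalIntegrable (fun r : ℝ => r ^ (2*(n:ℝ)+3) * ω ((r:ℂ))) volume 0 1 := by
    rw [intervalIntegrable_iff_integrableOn_Ioc_of_le (by norm_num : (0:ℝ) ≤ 1)]
    exact aux_int_pow ω hω _ (by positivity)
  rw [wMoment, wMoment, ← intervalIntegral.integral_sub hI1 hI2]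
  apply intervalIntegral.integral_congr
  intro r hr
  rw [uIcc_of_le (by norm_num : (0:ℝ) ≤ 1)] at hr
  show r ^ (2*(n:ℝ)+1) * ω ((r:ℂ)) - r ^ (2*(n:ℝ)+3) * ω ((r:ℂ))
      = r ^ (2*(n:ℝ)+1) * (1 - r ^ 2) * ω ((r:ℂ))
  rcases eq_or_lt_of_le hr.1 with h0 | h0
  · simp only [← h0]
    rw [Real.zero_rpow (by positivity), Real.zero_rpow (by positivity)]
    ring
  · have : r ^ (2*(n:ℝ)+3) = r ^ (2*(n:ℝ)+1) * r ^ 2 := by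
      rw [← Real.rpow_natCast r 2, ← Real.rpow_add h0]
      ring_nf
    rw [this]; ring

lemma aux_alg (A B W : ℂ) (hA : A ≠ 0) (hB : B ≠ 0) :
    (A - B) / (B * A) * W = W / B - W / A := by
  field_simp

lemma aux_alg2 (A W u : ℂ) (hA : A ≠ 0) : 2 * u * (W / (2 * A)) = u * W / A := by
  field_simp


/-- series expansion of 2(1 - conj(z)ζ)B^ω_z(ζ). -/
theorem stmt_7 (ω : ℂ → ℝ) (hω : IsRadialWeight ω) (z ζ : ℂ) (hz : z ∈ unitDisc)
    (hζ : ζ ∈ unitDisc) :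
    Summable (fun n : ℕ =>
      ‖(((∫ r in (0:ℝ)..1, r ^ (2 * (n : ℝ) + 1) * (1 - r ^ 2) * ω ((r : ℂ))) /
          (wMoment ω (2 * (n : ℝ) + 3) * wMoment ω (2 * (n : ℝ) + 1)) : ℝ) : ℂ) *
        (starRingEnd ℂ z * ζ) ^ (n + 1)‖) ∧
    2 * (1 - starRingEnd ℂ z * ζ) * bergmanKernel ω z ζ =
      1 / ((wMoment ω 1 : ℝ) : ℂ) +
        ∑' n : ℕ,
          (((∫ r in (0:ℝ)..1, r ^ (2 * (n : ℝ) + 1) * (1 - r ^ 2) * ω ((r : ℂ))) /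
            (wMoment ω (2 * (n : ℝ) + 3) * wMoment ω (2 * (n : ℝ) + 1)) : ℝ) : ℂ) *
          (starRingEnd ℂ z * ζ) ^ (n + 1) := by
  set w : ℂ := starRingEnd ℂ z * ζ with hwdef
  -- basic bounds
  have hq1 : ‖w‖ < 1 := by
    have hz' : ‖z‖ < 1 := hz
    have hζ' : ‖ζ‖ < 1 := hζ
    have habs : ‖w‖ = ‖z‖ * ‖ζ‖ := by
      rw [hwdef, norm_mul, Complex.norm_conj]
    rw [habs]
    nlinarith [norm_nonneg z, norm_nonneg ζ]
  set q : ℝ := ‖w‖ with hqdef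
  have hq0 : 0 ≤ q := norm_nonneg w
  set ρ : ℝ := Real.sqrt ((q + 1) / 2) with hρdef
  have hρ0 : 0 < ρ := Real.sqrt_pos.mpr (by positivity)
  have hρsq : ρ ^ 2 = (q + 1) / 2 := Real.sq_sqrt (by positivity)
  have hρ1 : ρ < 1 := by nlinarith
  have hqρ : q < ρ ^ 2 := by nlinarith
  set T : ℝ := wTail ω ρ with hTdef
  have hT : 0 < T := hω.tailPos ρ hρ0.le hρ1
  have hqr0 : 0 ≤ q / ρ ^ 2 := by positivity
  have hqr1 : q / ρ ^ 2 < 1 := by rw [div_lt_one (by positivity)]; exact hqρ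
  -- moments
  have hmpos : ∀ n : ℕ, 0 < wMoment ω (2 * (n : ℝ) + 1) := fun n =>
    aux_moment_pos ω hω _ (by positivity)
  have hmne : ∀ n : ℕ, ((wMoment ω (2 * (n : ℝ) + 1) : ℝ) : ℂ) ≠ 0 := fun n =>
    Complex.ofReal_ne_zero.mpr (hmpos n).ne'
  have hm3 : ∀ n : ℕ, wMoment ω (2 * (n : ℝ) + 3) = wMoment ω (2 * ((n + 1 : ℕ) : ℝ) + 1) := by
    intro n
    congr 1
    push_cast
    ring
  have hmlb : ∀ n : ℕ, ρ ^ (2 * n + 1) * T ≤ wMoment ω (2 * (n : ℝ) + 1) := by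
    intro n
    have h := aux_moment_lb ω hω (2 * (n : ℝ) + 1) (by positivity) hρ0 hρ1
    have e : ρ ^ (2 * n + 1 : ℕ) = ρ ^ (2 * (n : ℝ) + 1 : ℝ) := by
      rw [← Real.rpow_natCast ρ (2 * n + 1)]
      congr 1
      push_cast
      ring
    calc ρ ^ (2 * n + 1) * T = ρ ^ (2 * (n : ℝ) + 1 : ℝ) * T := by rw [e]
      _ ≤ _ := h
  -- the sequence a
  set a : ℕ → ℂ := fun n => w ^ n / ((wMoment ω (2 * (n : ℝ) + 1) : ℝ) : ℂ) with hadef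
  have hanorm : ∀ n : ℕ, ‖a n‖ ≤ (1 / (ρ * T)) * (q / ρ ^ 2) ^ n := by
    intro n
    have h1 : ‖a n‖ = q ^ n / wMoment ω (2 * (n : ℝ) + 1) := by
      rw [hadef]
      simp only [norm_div, norm_pow, Complex.norm_real, Real.norm_eq_abs,
        abs_of_pos (hmpos n), hqdef]
    rw [h1]
    have h2 : q ^ n / wMoment ω (2 * (n : ℝ) + 1) ≤ q ^ n / (ρ ^ (2 * n + 1) * T) :=
      div_le_div_of_nonneg_left (pow_nonneg hq0 n) (by positivity) (hmlb n)
    have h3 : q ^ n / (ρ ^ (2 * n + 1) * T) = (1 / (ρ * T)) * (q / ρ ^ 2) ^ n := by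
      have hρne : ρ ≠ 0 := hρ0.ne'
      have hTne : T ≠ 0 := hT.ne'
      rw [div_pow, ← pow_mul]
      rw [pow_succ, mul_assoc, ← div_div, mul_comm (1 / (ρ * T)), mul_one_div]
    linarith [h2, h3.le]
  have hgeo : Summable (fun n : ℕ => (1 / (ρ * T)) * (q / ρ ^ 2) ^ n) :=
    (summable_geometric_of_lt_one hqr0 hqr1).mul_left _
  have hanormsum : Summable (fun n : ℕ => ‖a n‖) :=
    Summable.of_nonneg_of_le (fun n => norm_nonneg _) hanorm hgeo
  have ha : Summable a := by
    rw [← summable_norm_iff]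
    exact hanormsum
  have hashift : Summable (fun n : ℕ => a (n + 1)) := (summable_nat_add_iff 1).mpr ha
  -- key identity for coefficients
  have hkey : ∀ n : ℕ,
      (((∫ r in (0:ℝ)..1, r ^ (2 * (n : ℝ) + 1) * (1 - r ^ 2) * ω ((r : ℂ))) /
          (wMoment ω (2 * (n : ℝ) + 3) * wMoment ω (2 * (n : ℝ) + 1)) : ℝ) : ℂ) *
        w ^ (n + 1) = a (n + 1) - w * a n := by
    intro n
    have hJ : (∫ r in (0:ℝ)..1, r ^ (2 * (n : ℝ) + 1) * (1 - r ^ 2) * ω ((r : ℂ)))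
        = wMoment ω (2 * (n : ℝ) + 1) - wMoment ω (2 * (n : ℝ) + 3) := (aux_diff ω hω n).symm
    have hA := hmne n
    have hB := hmne (n + 1)
    push_cast at hB
    rw [hJ, hm3 n, hadef]
    simp only
    push_cast
    rw [aux_alg _ _ _ hA hB]
    ring
  constructor
  · -- summability
    simp only [hkey]
    have hsum2 : Summable (fun n : ℕ => ‖a (n + 1)‖ + ‖w‖ * ‖a n‖) :=
      ((summable_nat_add_iff 1).mpr hanormsum).add (hanormsum.mul_left ‖w‖)
    refine Summable.of_nonneg_of_le (fun n => norm_nonneg _) (fun n => ?_) hsum2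
    calc ‖a (n + 1) - w * a n‖ ≤ ‖a (n + 1)‖ + ‖w * a n‖ := norm_sub_le _ _
      _ = ‖a (n + 1)‖ + ‖w‖ * ‖a n‖ := by rw [norm_mul]
  · -- identity
    rw [bergmanKernel, ← tsum_mul_left]
    have hstep1 : (fun n : ℕ => 2 * (1 - w) * (w ^ n / (2 * ((wMoment ω (2 * (n : ℝ) + 1) : ℝ) : ℂ))))
        = fun n : ℕ => a n - w * a n := by
      funext n
      rw [hadef]
      simp only
      rw [aux_alg2 _ _ _ (hmne n)]
      ring
    rw [hstep1, Summable.tsum_sub ha (ha.mul_left w), Summable.tsum_eq_zero_add ha]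
    have ha0 : a 0 = 1 / ((wMoment ω 1 : ℝ) : ℂ) := by
      rw [hadef]
      norm_num
    rw [ha0]
    rw [add_sub_assoc, ← Summable.tsum_sub hashift (ha.mul_left w)]
    congr 1
    exact (tsum_congr hkey).symm
end
end

section
/- Let ω ∈ D̂, let k ∈ ℕ, and let n₁,…,n_k ∈ ℕ and y₁,…,y_k ∈ ℕ, with N = n₁ + ⋯ + n_k. Then there exists a constant C = C(ω, N) > 0 such that for all x > 0: ∫_0^1 r^x (Π_{j=1}^k (1 − r^{y_j})^{n_j}) ω(r) dr ≤ C (Π_{j=1}^k y_j^{n_j}) · ω_x / x^N. -/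
open MeasureTheory Real Set

noncomputable section

lemma aux8_one_sub_pow_le (r : ℝ) (hr0 : 0 ≤ r) (hr1 : r ≤ 1) (y : ℕ) :
    1 - r ^ y ≤ (y : ℝ) * (1 - r) := by
  induction y with
  | zero => simp
  | succ m ih =>
    have hry : r ^ m ≤ 1 := pow_le_one₀ hr0 hr1
    have hrm : 0 ≤ r ^ m := pow_nonneg hr0 m
    have h1r : 0 ≤ 1 - r := by linarith
    have : r ^ (m+1) = r ^ m * r := pow_succ r m
    push_cast
    nlinarith [ih, mul_le_mul_of_nonneg_right hry h1r, mul_nonneg hrm h1r]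

lemma aux8_neg_log_v (v : ℝ) (hv0 : 0 < v) (hv1 : v ≤ 1) : v * (-Real.log v) ≤ 1 - v := by
  have h := Real.log_le_sub_one_of_pos (show (0:ℝ) < 1/v by positivity)
  rw [Real.log_div one_ne_zero (ne_of_gt hv0), Real.log_one] at h
  have : 0 - Real.log v ≤ 1/v - 1 := h
  calc v * (-Real.log v) ≤ v * (1/v - 1) := by
        apply mul_le_mul_of_nonneg_left _ hv0.le
        linarith
    _ = 1 - v := by field_simp

lemma aux8_ptwise (N : ℕ) (x r : ℝ) (hx : 0 < x) (hr0 : 0 ≤ r) (hr1 : r ≤ 1) :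
    x ^ N * (1 - r) ^ N * r ^ x ≤ 2 ^ (N * N) * r ^ (x / 2 ^ N) := by
  rcases eq_or_lt_of_le hr0 with h0 | h0
  · rw [← h0, Real.zero_rpow (ne_of_gt hx), Real.zero_rpow (by positivity)]
    simp
  set v : ℝ := r ^ (x / 2 ^ N) with hv
  have hv0 : 0 < v := Real.rpow_pos_of_pos h0 _
  have hv1 : v ≤ 1 := Real.rpow_le_one hr0 hr1 (by positivity)
  have hlogv : Real.log v = (x / 2 ^ N) * Real.log r := Real.log_rpow h0 _
  have hrx : r ^ x = v ^ (2 ^ N : ℕ) := by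
    rw [hv, ← Real.rpow_natCast (r ^ (x / 2 ^ N)) (2 ^ N), ← Real.rpow_mul hr0]
    congr 1
    push_cast
    field_simp
  have hlogr : 1 - r ≤ -Real.log r := by
    have := Real.log_le_sub_one_of_pos h0
    linarith
  have hxr : x * (1 - r) ≤ 2 ^ N * (-Real.log v) := by
    have : x * (1 - r) ≤ x * (-Real.log r) :=
      mul_le_mul_of_nonneg_left hlogr hx.le
    calc x * (1 - r) ≤ x * (-Real.log r) := this
      _ = 2 ^ N * (-Real.log v) := by
          rw [hlogv]; field_simp
  have hL : x ^ N * (1 - r) ^ N = (x * (1 - r)) ^ N := (mul_pow x (1-r) N).symm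
  have hnl : 0 ≤ -Real.log v := by
    have := Real.log_nonpos hv0.le hv1
    linarith
  have step1 : (x * (1 - r)) ^ N ≤ (2 ^ N * (-Real.log v)) ^ N :=
    pow_le_pow_left₀ (by nlinarith) hxr N
  have key : (-Real.log v) ^ N * v ^ (2 ^ N : ℕ) ≤ v := by
    have hsplit : v ^ (2 ^ N : ℕ) = v ^ N * v ^ (2 ^ N - N : ℕ) := by
      rw [← pow_add]
      congr 1
      have h2N : N ≤ 2 ^ N := Nat.le_of_lt ((Nat.lt_two_pow_self (n := N)))
      omega
    have hvl : v * (-Real.log v) ≤ 1 := le_trans (aux8_neg_log_v v hv0 hv1) (by linarith)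
    have h1 : (-Real.log v) ^ N * v ^ N ≤ 1 := by
      rw [← mul_pow]
      calc (-Real.log v * v) ^ N ≤ 1 ^ N := pow_le_pow_left₀ (by nlinarith) (by nlinarith) N
        _ = 1 := one_pow N
    have h2 : v ^ (2 ^ N - N : ℕ) ≤ v := by
      have hge : 1 ≤ 2 ^ N - N := by
        have := (Nat.lt_two_pow_self (n := N)); omega
      calc v ^ (2 ^ N - N : ℕ) ≤ v ^ 1 := pow_le_pow_of_le_one hv0.le hv1 hge
        _ = v := pow_one v
    calc (-Real.log v) ^ N * v ^ (2 ^ N : ℕ)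
        = ((-Real.log v) ^ N * v ^ N) * v ^ (2 ^ N - N : ℕ) := by rw [hsplit]; ring
      _ ≤ 1 * v := by
          apply mul_le_mul h1 h2 (by positivity) zero_le_one
      _ = v := one_mul v
  calc x ^ N * (1 - r) ^ N * r ^ x
      = (x * (1-r)) ^ N * v ^ (2 ^ N : ℕ) := by rw [hL, hrx]
    _ ≤ (2 ^ N * (-Real.log v)) ^ N * v ^ (2 ^ N : ℕ) := by
        apply mul_le_mul_of_nonneg_right step1 (by positivity)
    _ = 2 ^ (N * N) * ((-Real.log v) ^ N * v ^ (2 ^ N : ℕ)) := by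
        rw [mul_pow, ← pow_mul]; ring
    _ ≤ 2 ^ (N * N) * v := by
        apply mul_le_mul_of_nonneg_left key (by positivity)

lemma aux8_prodbound (k : ℕ) (n y : Fin k → ℕ) (r : ℝ) (hr0 : 0 ≤ r) (hr1 : r ≤ 1) :
    (∏ j, (1 - r ^ (y j)) ^ (n j)) ≤ (∏ j, ((y j : ℝ)) ^ (n j)) * (1 - r) ^ (∑ j, n j) := by
  have h1 : (∏ j, (1 - r ^ (y j)) ^ (n j)) ≤ ∏ j, ((y j : ℝ) * (1 - r)) ^ (n j) := by
    apply Finset.prod_le_prod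
    · intro j _
      exact pow_nonneg (by nlinarith [pow_le_one₀ hr0 hr1 (n := y j)]) _
    · intro j _
      exact pow_le_pow_left₀ (by nlinarith [pow_le_one₀ hr0 hr1 (n := y j)])
        (aux8_one_sub_pow_le r hr0 hr1 (y j)) _
  calc (∏ j, (1 - r ^ (y j)) ^ (n j)) ≤ ∏ j, ((y j : ℝ) * (1 - r)) ^ (n j) := h1
    _ = (∏ j, ((y j : ℝ)) ^ (n j)) * ∏ j, (1 - r) ^ (n j) := by
        simp_rw [mul_pow, Finset.prod_mul_distrib]
    _ = (∏ j, ((y j : ℝ)) ^ (n j)) * (1 - r) ^ (∑ j, n j) := by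
        rw [Finset.prod_pow_eq_pow_sum]


section Tprops
variable (f : ℝ → ℝ)

/-- Tail of f. -/
noncomputable def aux8_T (s : ℝ) : ℝ := ∫ t in s..(1:ℝ), f t

variable (hfi : IntegrableOn f (Ioc 0 1)) (hf0 : ∀ s, 0 ≤ f s)
include hfi

lemma aux8_hIIcc : IntegrableOn f (Icc (0:ℝ) 1) :=
  (integrableOn_Icc_iff_integrableOn_Ioc).mpr hfi

lemma aux8_hII : IntervalIntegrable f volume 0 1 :=
  (intervalIntegrable_iff_integrableOn_Ioc_of_le (by norm_num)).mpr hfi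

lemma aux8_hIIsub {a b : ℝ} (h0 : 0 ≤ a) (hab : a ≤ b) (h1 : b ≤ 1) :
    IntervalIntegrable f volume a b := by
  apply (aux8_hII f hfi).mono_set
  rw [Set.uIcc_of_le (by norm_num : (0:ℝ) ≤ 1), Set.uIcc_of_le hab]
  intro t ht
  exact ⟨le_trans h0 ht.1, le_trans ht.2 h1⟩

lemma aux8_T_cont : ContinuousOn (aux8_T f) (Icc 0 1) := by
  have := intervalIntegral.continuousOn_primitive_interval_left
    (a := (0:ℝ)) (b := (1:ℝ)) (μ := volume) (f := f)
    (by rw [Set.uIcc_of_le (by norm_num : (0:ℝ) ≤ 1)]; exact aux8_hIIcc f hfi)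
  rwa [Set.uIcc_of_le (by norm_num : (0:ℝ) ≤ 1)] at this

include hf0

omit hfi in
lemma aux8_T_nonneg {s : ℝ} (hs : s ≤ 1) : 0 ≤ aux8_T f s :=
  intervalIntegral.integral_nonneg hs (fun u _ => hf0 u)

lemma aux8_T_antitone {a b : ℝ} (h0 : 0 ≤ a) (hab : a ≤ b) (h1 : b ≤ 1) : aux8_T f b ≤ aux8_T f a := by
  have hsplit : (∫ t in a..b, f t) + (∫ t in b..1, f t) = ∫ t in a..1, f t :=
    intervalIntegral.integral_add_adjacent_intervals
      (aux8_hIIsub f hfi h0 hab h1) (aux8_hIIsub f hfi (le_trans h0 hab) h1 le_rfl)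
  have hnn : 0 ≤ ∫ t in a..b, f t :=
    intervalIntegral.integral_nonneg hab (fun u _ => hf0 u)
  unfold aux8_T
  linarith

lemma aux8_T_le_T0 {s : ℝ} (h0 : 0 ≤ s) (h1 : s ≤ 1) : aux8_T f s ≤ aux8_T f 0 :=
  aux8_T_antitone f hfi hf0 le_rfl h0 h1

end Tprops

lemma aux8_tail_repr (f : ℝ → ℝ) (hfi : IntegrableOn f (Ioc 0 1)) (x : ℝ) (hx : 0 < x) :
    ∫ r in (0:ℝ)..1, r ^ x * f r
      = x * ∫ s in (0:ℝ)..1, s ^ (x-1) * (∫ t in s..(1:ℝ), f t) := by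
  set μ : Measure ℝ := volume.restrict (Ioc (0:ℝ) 1) with hμ
  have hpow : Integrable (fun s : ℝ => s ^ (x-1)) μ := by
    rw [hμ, ← IntegrableOn, ← intervalIntegrable_iff_integrableOn_Ioc_of_le (by norm_num : (0:ℝ) ≤ 1)]
    exact intervalIntegral.intervalIntegrable_rpow' (by linarith)
  have hG : Integrable (fun p : ℝ × ℝ => p.1 ^ (x-1) * f p.2) (μ.prod μ) :=
    hpow.mul_prod hfi
  have hmeas : MeasurableSet {q : ℝ × ℝ | q.1 < q.2} :=
    measurableSet_lt measurable_fst measurable_snd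
  set K : ℝ × ℝ → ℝ :=
    {q : ℝ × ℝ | q.1 < q.2}.indicator (fun p : ℝ × ℝ => p.1 ^ (x-1) * f p.2) with hK
  have hKint : Integrable K (μ.prod μ) := by
    apply Integrable.mono' hG.norm (hG.aestronglyMeasurable.indicator hmeas)
    filter_upwards with p
    exact norm_indicator_le_norm_self _ p
  have swap : ∫ s, (∫ r, K (s, r) ∂μ) ∂μ = ∫ r, (∫ s, K (s, r) ∂μ) ∂μ :=
    integral_integral_swap (by exact hKint)
  have hLHS : ∫ s, (∫ r, K (s, r) ∂μ) ∂μ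
      = ∫ s in Ioc (0:ℝ) 1, s ^ (x-1) * (∫ t in s..(1:ℝ), f t) := by
    rw [hμ]
    apply setIntegral_congr_fun measurableSet_Ioc
    intro s hs
    show (∫ r in Ioc (0:ℝ) 1, K (s, r)) = s ^ (x-1) * (∫ t in s..(1:ℝ), f t)
    have h1 : (fun r => K (s, r)) = (Ioi s).indicator (fun r => s ^ (x-1) * f r) := by
      funext r
      simp only [hK, Set.indicator_apply, Set.mem_setOf_eq, Set.mem_Ioi]
    rw [h1, integral_indicator measurableSet_Ioi,
      Measure.restrict_restrict measurableSet_Ioi]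
    have h2 : Ioi s ∩ Ioc 0 1 = Ioc s 1 := by
      ext r
      simp only [Set.mem_inter_iff, Set.mem_Ioi, Set.mem_Ioc]
      constructor
      · rintro ⟨h, _, h2⟩; exact ⟨h, h2⟩
      · rintro ⟨h, h2⟩; exact ⟨h, lt_trans hs.1 h, h2⟩
    rw [h2, MeasureTheory.integral_const_mul, intervalIntegral.integral_of_le hs.2]
  have hRHS : ∫ r, (∫ s, K (s, r) ∂μ) ∂μ
      = ∫ r in Ioc (0:ℝ) 1, (r ^ x / x) * f r := by
    rw [hμ]
    apply setIntegral_congr_fun measurableSet_Ioc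
    intro r hr
    show (∫ s in Ioc (0:ℝ) 1, K (s, r)) = (r ^ x / x) * f r
    have h1 : (fun s => K (s, r)) = (Iio r).indicator (fun s => s ^ (x-1) * f r) := by
      funext s
      simp only [hK, Set.indicator_apply, Set.mem_setOf_eq, Set.mem_Iio]
    rw [h1, integral_indicator measurableSet_Iio,
      Measure.restrict_restrict measurableSet_Iio]
    have h2 : Iio r ∩ Ioc 0 1 = Ioo 0 r := by
      ext s
      simp only [Set.mem_inter_iff, Set.mem_Iio, Set.mem_Ioc, Set.mem_Ioo]
      constructor
      · rintro ⟨h, h2, _⟩; exact ⟨h2, h⟩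
      · rintro ⟨h2, h⟩; exact ⟨h, h2, le_trans (le_of_lt h) hr.2⟩
    rw [h2, MeasureTheory.integral_mul_const, ← integral_Ioc_eq_integral_Ioo,
      ← intervalIntegral.integral_of_le hr.1.le,
      integral_rpow (Or.inl (by linarith))]
    rw [Real.zero_rpow (by linarith), sub_add_cancel]
    norm_num
  have hfinal : ∫ r in Ioc (0:ℝ) 1, (r ^ x / x) * f r
      = (1/x) * ∫ r in Ioc (0:ℝ) 1, r ^ x * f r := by
    rw [← MeasureTheory.integral_const_mul]
    congr 1
    funext r
    ring
  rw [intervalIntegral.integral_of_le (by norm_num : (0:ℝ) ≤ 1),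
    intervalIntegral.integral_of_le (by norm_num : (0:ℝ) ≤ 1)]
  have := hLHS.symm.trans (swap.trans (hRHS.trans hfinal))
  rw [this]
  field_simp

lemma aux8_sq_image : (fun u : ℝ => u ^ 2) '' Ioo 0 1 = Ioo (0:ℝ) 1 := by
  ext v
  constructor
  · rintro ⟨u, ⟨hu0, hu1⟩, rfl⟩
    exact ⟨pow_pos hu0 2, pow_lt_one₀ hu0.le hu1 (by norm_num)⟩
  · rintro ⟨hv0, hv1⟩
    exact ⟨Real.sqrt v, ⟨Real.sqrt_pos.mpr hv0,
      (Real.sqrt_lt' one_pos).mpr (by norm_num [hv1])⟩, Real.sq_sqrt hv0.le⟩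

lemma aux8_moment_double (f : ℝ → ℝ) (hfi : IntegrableOn f (Ioc 0 1)) (hf0 : ∀ s, 0 ≤ f s)
    (C : ℝ) (hC : 0 < C)
    (hT : ∀ u : ℝ, 0 < u → u < 1 → aux8_T f (u ^ 2) ≤ C * aux8_T f u)
    (x : ℝ) (hx : 0 < x) :
    (∫ r in (0:ℝ)..1, r ^ (x/2) * f r) ≤ C * ∫ r in (0:ℝ)..1, r ^ x * f r := by
  have h01 : (0:ℝ) ≤ 1 := by norm_num
  have hrepr2 := aux8_tail_repr f hfi (x/2) (half_pos hx)
  have hrepr := aux8_tail_repr f hfi x hx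
  have hTdef : ∀ s : ℝ, (∫ t in s..(1:ℝ), f t) = aux8_T f s := fun s => rfl
  simp only [hTdef] at hrepr hrepr2
  -- integrability of the comparison integrands on Ioo 0 1
  have hrpow_int : IntegrableOn (fun u : ℝ => u ^ (x-1)) (Ioo 0 1) := by
    apply IntegrableOn.mono_set _ Ioo_subset_Ioc_self
    rw [← intervalIntegrable_iff_integrableOn_Ioc_of_le h01]
    exact intervalIntegral.intervalIntegrable_rpow' (by linarith)
  have hTc : ContinuousOn (aux8_T f) (Icc 0 1) := aux8_T_cont f hfi
  have hcont_pow : ContinuousOn (fun u : ℝ => u ^ (x-1)) (Ioo 0 1) := by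
    apply ContinuousOn.rpow_const continuousOn_id
    intro u hu
    exact Or.inl (ne_of_gt hu.1)
  have int1 : IntegrableOn (fun u : ℝ => u ^ (x-1) * aux8_T f (u ^ 2)) (Ioo 0 1) := by
    apply Integrable.mono' ((hrpow_int.norm.const_mul (aux8_T f 0)))
    · apply ContinuousOn.aestronglyMeasurable _ measurableSet_Ioo
      apply hcont_pow.mul
      apply hTc.comp (continuousOn_pow 2)
      intro u hu
      exact ⟨(sq_nonneg u), pow_le_one₀ hu.1.le hu.2.le⟩
    · rw [ae_restrict_iff' measurableSet_Ioo]
      apply ae_of_all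
      intro u hu
      have h1 : (0:ℝ) ≤ u ^ (x-1) := Real.rpow_nonneg hu.1.le _
      have h2 : 0 ≤ aux8_T f (u ^ 2) := aux8_T_nonneg f hf0 (pow_le_one₀ hu.1.le hu.2.le)
      have h3 : aux8_T f (u ^ 2) ≤ aux8_T f 0 :=
        aux8_T_le_T0 f hfi hf0 (sq_nonneg u) (pow_le_one₀ hu.1.le hu.2.le)
      rw [Real.norm_eq_abs, abs_of_nonneg (mul_nonneg h1 h2), Real.norm_eq_abs,
        abs_of_nonneg h1]
      calc u ^ (x-1) * aux8_T f (u ^ 2) ≤ u ^ (x-1) * aux8_T f 0 :=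
            mul_le_mul_of_nonneg_left h3 h1
        _ = aux8_T f 0 * u ^ (x-1) := mul_comm _ _
  have int2 : IntegrableOn (fun u : ℝ => u ^ (x-1) * aux8_T f u) (Ioo 0 1) := by
    apply Integrable.mono' ((hrpow_int.norm.const_mul (aux8_T f 0)))
    · apply ContinuousOn.aestronglyMeasurable _ measurableSet_Ioo
      exact hcont_pow.mul (hTc.mono Ioo_subset_Icc_self)
    · rw [ae_restrict_iff' measurableSet_Ioo]
      apply ae_of_all
      intro u hu
      have h1 : (0:ℝ) ≤ u ^ (x-1) := Real.rpow_nonneg hu.1.le _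
      have h2 : 0 ≤ aux8_T f u := aux8_T_nonneg f hf0 hu.2.le
      have h3 : aux8_T f u ≤ aux8_T f 0 := aux8_T_le_T0 f hfi hf0 hu.1.le hu.2.le
      rw [Real.norm_eq_abs, abs_of_nonneg (mul_nonneg h1 h2), Real.norm_eq_abs,
        abs_of_nonneg h1]
      calc u ^ (x-1) * aux8_T f u ≤ u ^ (x-1) * aux8_T f 0 := mul_le_mul_of_nonneg_left h3 h1
        _ = aux8_T f 0 * u ^ (x-1) := mul_comm _ _
  -- change of variables
  have hder : ∀ u ∈ Ioo (0:ℝ) 1, HasDerivWithinAt (fun u : ℝ => u ^ 2) (2*u) (Ioo 0 1) u := by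
    intro u _
    simpa using (hasDerivAt_pow 2 u).hasDerivWithinAt
  have hinj : InjOn (fun u : ℝ => u ^ 2) (Ioo 0 1) := by
    have hmono : StrictMonoOn (fun u : ℝ => u ^ 2) (Ioo 0 1) := by
      intro a ha b hb hab
      simp only
      nlinarith [ha.1]
    exact hmono.injOn
  have cov := MeasureTheory.integral_image_eq_integral_abs_deriv_smul measurableSet_Ioo
    hder hinj (fun s => s ^ (x/2-1) * aux8_T f s)
  rw [aux8_sq_image] at cov
  -- rewrite the transformed integrand
  have hcongr : ∫ u in Ioo (0:ℝ) 1, |2*u| • ((u^2:ℝ) ^ (x/2-1) * aux8_T f (u^2))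
      = ∫ u in Ioo (0:ℝ) 1, 2 * (u ^ (x-1) * aux8_T f (u^2)) := by
    apply setIntegral_congr_fun measurableSet_Ioo
    intro u hu
    have hu0 : 0 < u := hu.1
    have e1 : ((u:ℝ)^2) ^ (x/2-1) = u ^ (x-2) := by
      rw [← Real.rpow_natCast u 2, ← Real.rpow_mul hu0.le]
      norm_num
      ring_nf
    have e2 : u * u ^ (x-2) = u ^ (x-1) := by
      have hx1 : x - 1 = 1 + (x-2) := by ring
      rw [hx1, Real.rpow_add hu0, Real.rpow_one]
    show |2*u| • ((u^2:ℝ) ^ (x/2-1) * aux8_T f (u^2)) = 2 * (u ^ (x-1) * aux8_T f (u^2))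
    rw [smul_eq_mul, e1, abs_of_pos (by linarith), ← e2]
    ring
  -- pointwise comparison
  have hmono : ∫ u in Ioo (0:ℝ) 1, 2 * (u ^ (x-1) * aux8_T f (u^2))
      ≤ ∫ u in Ioo (0:ℝ) 1, (2*C) * (u ^ (x-1) * aux8_T f u) := by
    apply setIntegral_mono_on (int1.const_mul 2) ((int2.const_mul (2*C))) measurableSet_Ioo
    intro u hu
    have h1 : (0:ℝ) ≤ u ^ (x-1) := Real.rpow_nonneg hu.1.le _
    have h2 : aux8_T f (u^2) ≤ C * aux8_T f u := hT u hu.1 hu.2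
    calc 2 * (u ^ (x-1) * aux8_T f (u^2)) ≤ 2 * (u ^ (x-1) * (C * aux8_T f u)) := by
          apply mul_le_mul_of_nonneg_left _ (by norm_num)
          exact mul_le_mul_of_nonneg_left h2 h1
      _ = (2*C) * (u ^ (x-1) * aux8_T f u) := by ring
  -- assemble
  have I2nn : 0 ≤ ∫ s in (0:ℝ)..1, s ^ (x-1) * aux8_T f s := by
    apply intervalIntegral.integral_nonneg h01
    intro s hs
    exact mul_nonneg (Real.rpow_nonneg hs.1 _) (aux8_T_nonneg f hf0 hs.2)
  have key : (∫ s in (0:ℝ)..1, s ^ (x/2-1) * aux8_T f s)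
      ≤ (2*C) * ∫ s in (0:ℝ)..1, s ^ (x-1) * aux8_T f s := by
    rw [intervalIntegral.integral_of_le h01, integral_Ioc_eq_integral_Ioo, cov,
      intervalIntegral.integral_of_le h01, integral_Ioc_eq_integral_Ioo]
    calc (∫ u in Ioo (0:ℝ) 1, |2*u| • ((u^2:ℝ) ^ (x/2-1) * aux8_T f (u^2)))
        = ∫ u in Ioo (0:ℝ) 1, 2 * (u ^ (x-1) * aux8_T f (u^2)) := hcongr
      _ ≤ ∫ u in Ioo (0:ℝ) 1, (2*C) * (u ^ (x-1) * aux8_T f u) := hmono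
      _ = (2*C) * ∫ u in Ioo (0:ℝ) 1, (u ^ (x-1) * aux8_T f u) := MeasureTheory.integral_const_mul _ _
  rw [hrepr2, hrepr]
  calc x/2 * ∫ s in (0:ℝ)..1, s ^ (x/2-1) * aux8_T f s
      ≤ x/2 * ((2*C) * ∫ s in (0:ℝ)..1, s ^ (x-1) * aux8_T f s) :=
        mul_le_mul_of_nonneg_left key (by linarith)
    _ = C * (x * ∫ s in (0:ℝ)..1, s ^ (x-1) * aux8_T f s) := by ring

-- moments iteration
lemma aux8_moment_iter (f : ℝ → ℝ) (hfi : IntegrableOn f (Ioc 0 1)) (hf0 : ∀ s, 0 ≤ f s)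
    (C : ℝ) (hC : 0 < C)
    (hT : ∀ u : ℝ, 0 < u → u < 1 → aux8_T f (u ^ 2) ≤ C * aux8_T f u) :
    ∀ (k : ℕ) (x : ℝ), 0 < x →
      (∫ r in (0:ℝ)..1, r ^ (x / 2 ^ k) * f r) ≤ C ^ k * ∫ r in (0:ℝ)..1, r ^ x * f r := by
  intro k
  induction k with
  | zero => intro x hx; simp
  | succ m ih =>
    intro x hx
    have hx' : 0 < x / 2 ^ m := by positivity
    have h1 : x / 2 ^ (m+1) = (x / 2 ^ m) / 2 := by ring
    calc (∫ r in (0:ℝ)..1, r ^ (x / 2 ^ (m+1)) * f r)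
        = ∫ r in (0:ℝ)..1, r ^ ((x / 2 ^ m) / 2) * f r := by rw [h1]
      _ ≤ C * ∫ r in (0:ℝ)..1, r ^ (x / 2 ^ m) * f r :=
          aux8_moment_double f hfi hf0 C hC hT _ hx'
      _ ≤ C * (C ^ m * ∫ r in (0:ℝ)..1, r ^ x * f r) :=
          mul_le_mul_of_nonneg_left (ih x hx) hC.le
      _ = C ^ (m+1) * ∫ r in (0:ℝ)..1, r ^ x * f r := by ring


/-- estimate for generalized moments with polynomial factors. -/
theorem stmt_8 (ω : ℂ → ℝ) (hω : IsRadialWeight ω) (hD : Dhat ω) (N : ℕ) :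
    ∃ C : ℝ, 0 < C ∧ ∀ (k : ℕ) (n y : Fin k → ℕ), (∑ j, n j) = N →
      ∀ x : ℝ, 0 < x →
        (∫ r in (0:ℝ)..1, r ^ x * (∏ j, (1 - r ^ (y j)) ^ (n j)) * ω ((r : ℂ))) ≤
          C * (∏ j, ((y j : ℝ)) ^ (n j)) * (wMoment ω x / x ^ N) := by
  obtain ⟨C₀, hC₀, hDb⟩ := hD
  set f : ℝ → ℝ := fun s => ω ((s : ℂ)) with hf
  have hf0 : ∀ s, 0 ≤ f s := fun s => hω.nonneg _
  have h01 : (0:ℝ) ≤ 1 := by norm_num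
  -- integrability of f on (0,1]
  have aux8_hII : IntervalIntegrable f volume 0 1 := by
    by_contra hcon
    have := hω.tailPos 0 le_rfl (by norm_num)
    rw [wTail, intervalIntegral.integral_undef hcon] at this
    exact lt_irrefl 0 this
  have hfi : IntegrableOn f (Ioc 0 1) :=
    (intervalIntegrable_iff_integrableOn_Ioc_of_le h01).mp aux8_hII
  -- tail doubling at u ↦ u²
  have hwT : ∀ s : ℝ, wTail ω s = aux8_T f s := fun s => rfl
  have hT : ∀ u : ℝ, 0 < u → u < 1 → aux8_T f (u ^ 2) ≤ C₀ * aux8_T f u := by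
    intro u hu0 hu1
    have h2 : u ^ 2 < 1 := pow_lt_one₀ hu0.le hu1 (by norm_num)
    have := hDb (u ^ 2) (sq_nonneg u) h2
    rw [hwT, hwT] at this
    have hmid : aux8_T f ((1 + u ^ 2) / 2) ≤ aux8_T f u := by
      apply aux8_T_antitone f hfi hf0 hu0.le (by nlinarith) (by nlinarith)
    calc aux8_T f (u ^ 2) ≤ C₀ * aux8_T f ((1 + u ^ 2) / 2) := this
      _ ≤ C₀ * aux8_T f u := mul_le_mul_of_nonneg_left hmid hC₀.le
  refine ⟨2 ^ (N*N) * C₀ ^ N, by positivity, ?_⟩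
  intro k n y hsum x hx
  set P : ℝ := ∏ j, ((y j : ℝ)) ^ (n j) with hP
  have hP0 : 0 ≤ P := Finset.prod_nonneg fun j _ => pow_nonneg (Nat.cast_nonneg _) _
  have hxN : (0:ℝ) < x ^ N := pow_pos hx N
  -- measurability helper
  have hfaesm : AEStronglyMeasurable f (volume.restrict (Ioc 0 1)) := hfi.aestronglyMeasurable
  have hcont1 : ContinuousOn (fun r : ℝ => r ^ x) (Ioc 0 1) :=
    ContinuousOn.rpow_const continuousOn_id (fun r hr => Or.inl (ne_of_gt hr.1))
  have hcont2 : ContinuousOn (fun r : ℝ => r ^ (x / 2 ^ N)) (Ioc 0 1) :=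
    ContinuousOn.rpow_const continuousOn_id (fun r hr => Or.inl (ne_of_gt hr.1))
  have hcontprod : Continuous (fun r : ℝ => ∏ j, (1 - r ^ (y j)) ^ (n j)) := by
    continuity
  -- integrability of both integrands
  have intA : IntegrableOn (fun r : ℝ => r ^ x * (∏ j, (1 - r ^ (y j)) ^ (n j)) * f r)
      (Ioc 0 1) := by
    apply Integrable.mono' hfi
    · exact (((hcont1.aestronglyMeasurable measurableSet_Ioc).mul
        (hcontprod.continuousOn.aestronglyMeasurable measurableSet_Ioc)).mul hfaesm)
    · rw [ae_restrict_iff' measurableSet_Ioc]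
      apply ae_of_all
      intro r hr
      have h1 : (0:ℝ) ≤ r ^ x := Real.rpow_nonneg hr.1.le _
      have h2 : r ^ x ≤ 1 := Real.rpow_le_one hr.1.le hr.2 hx.le
      have h3 : 0 ≤ (∏ j, (1 - r ^ (y j)) ^ (n j)) :=
        Finset.prod_nonneg fun j _ => pow_nonneg
          (by nlinarith [pow_le_one₀ hr.1.le hr.2 (n := y j)]) _
      have h4 : (∏ j, (1 - r ^ (y j)) ^ (n j)) ≤ 1 := by
        apply Finset.prod_le_one
        · intro j _
          exact pow_nonneg (by nlinarith [pow_le_one₀ hr.1.le hr.2 (n := y j)]) _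
        · intro j _
          exact pow_le_one₀ (by nlinarith [pow_le_one₀ hr.1.le hr.2 (n := y j)])
            (by nlinarith [pow_nonneg hr.1.le (y j)])
      rw [Real.norm_eq_abs, abs_of_nonneg (mul_nonneg (mul_nonneg h1 h3) (hf0 r))]
      calc r ^ x * (∏ j, (1 - r ^ (y j)) ^ (n j)) * f r
          ≤ 1 * 1 * f r := by
            apply mul_le_mul _ le_rfl (hf0 r) (by norm_num)
            exact mul_le_mul h2 h4 h3 (by norm_num)
        _ = f r := by ring
  have intB : IntegrableOn (fun r : ℝ => r ^ (x / 2 ^ N) * f r) (Ioc 0 1) := by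
    apply Integrable.mono' hfi
    · exact (hcont2.aestronglyMeasurable measurableSet_Ioc).mul hfaesm
    · rw [ae_restrict_iff' measurableSet_Ioc]
      apply ae_of_all
      intro r hr
      have h1 : (0:ℝ) ≤ r ^ (x / 2 ^ N) := Real.rpow_nonneg hr.1.le _
      have h2 : r ^ (x / 2 ^ N) ≤ 1 := Real.rpow_le_one hr.1.le hr.2 (by positivity)
      rw [Real.norm_eq_abs, abs_of_nonneg (mul_nonneg h1 (hf0 r))]
      calc r ^ (x / 2 ^ N) * f r ≤ 1 * f r :=
            mul_le_mul_of_nonneg_right h2 (hf0 r)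
        _ = f r := one_mul _
  -- step A: pointwise bound and integral monotonicity
  have stepA : (∫ r in (0:ℝ)..1, r ^ x * (∏ j, (1 - r ^ (y j)) ^ (n j)) * f r)
      ≤ ∫ r in (0:ℝ)..1, (2 ^ (N*N) * P / x ^ N) * (r ^ (x / 2 ^ N) * f r) := by
    rw [intervalIntegral.integral_of_le h01, intervalIntegral.integral_of_le h01]
    apply setIntegral_mono_on intA ((intB.const_mul _)) measurableSet_Ioc
    intro r hr
    have hr0 : (0:ℝ) ≤ r := hr.1.le
    have hr1 : r ≤ 1 := hr.2
    have h1 : (0:ℝ) ≤ r ^ x := Real.rpow_nonneg hr0 _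
    have hpb := aux8_prodbound k n y r hr0 hr1
    rw [hsum] at hpb
    have hpw := aux8_ptwise N x r hx hr0 hr1
    -- (1-r)^N * r^x ≤ 2^(N*N)/x^N * r^(x/2^N)
    have hpw2 : (1 - r) ^ N * r ^ x ≤ (2 ^ (N*N) / x ^ N) * r ^ (x / 2 ^ N) := by
      rw [div_mul_eq_mul_div, le_div_iff₀ hxN]
      nlinarith [hpw]
    calc r ^ x * (∏ j, (1 - r ^ (y j)) ^ (n j)) * f r
        ≤ r ^ x * (P * (1 - r) ^ N) * f r := by
          apply mul_le_mul_of_nonneg_right _ (hf0 r)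
          exact mul_le_mul_of_nonneg_left hpb h1
      _ = P * ((1 - r) ^ N * r ^ x) * f r := by ring
      _ ≤ P * ((2 ^ (N*N) / x ^ N) * r ^ (x / 2 ^ N)) * f r := by
          apply mul_le_mul_of_nonneg_right _ (hf0 r)
          exact mul_le_mul_of_nonneg_left hpw2 hP0
      _ = (2 ^ (N*N) * P / x ^ N) * (r ^ (x / 2 ^ N) * f r) := by ring
  -- step B
  have hiter := aux8_moment_iter f hfi hf0 C₀ hC₀ hT N x hx
  have hmom_nn : 0 ≤ ∫ r in (0:ℝ)..1, r ^ x * f r := by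
    apply intervalIntegral.integral_nonneg h01
    intro r hr
    exact mul_nonneg (Real.rpow_nonneg hr.1 _) (hf0 r)
  have hconst_nn : (0:ℝ) ≤ 2 ^ (N*N) * P / x ^ N := by positivity
  calc (∫ r in (0:ℝ)..1, r ^ x * (∏ j, (1 - r ^ (y j)) ^ (n j)) * f r)
      ≤ ∫ r in (0:ℝ)..1, (2 ^ (N*N) * P / x ^ N) * (r ^ (x / 2 ^ N) * f r) := stepA
    _ = (2 ^ (N*N) * P / x ^ N) * ∫ r in (0:ℝ)..1, r ^ (x / 2 ^ N) * f r :=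
        intervalIntegral.integral_const_mul _ _
    _ ≤ (2 ^ (N*N) * P / x ^ N) * (C₀ ^ N * ∫ r in (0:ℝ)..1, r ^ x * f r) :=
        mul_le_mul_of_nonneg_left hiter hconst_nn
    _ = 2 ^ (N*N) * C₀ ^ N * P * ((∫ r in (0:ℝ)..1, r ^ x * f r) / x ^ N) := by
        field_simp
    _ = 2 ^ (N*N) * C₀ ^ N * P * (wMoment ω x / x ^ N) := rfl
end
end

section
/- Let ω and ν be radial weights and let f be analytic on 𝔻 with f ∈ L¹_ω and sup_{z∈𝔻} |V_{ω,ν̂}(f)(z)| < ∞. Then for every 0 < r < 1, the dilation f_r(z) = f(rz) satisfies sup_{z∈𝔻} |V_{ω,ν̂}(f_r)(z)| ≤ sup_{z∈𝔻} |V_{ω,ν̂}(f)(z)|. -/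
open MeasureTheory Real Set

noncomputable section

namespace Stmt13Aux

open Metric

variable {ω ν : ℂ → ℝ}

lemma rot_measurePreserving (a : Circle) :
    MeasurePreserving (fun z : ℂ => (a : ℂ) * z) dA dA := by
  have h : MeasurePreserving (⇑(rotation a)) (volume : Measure ℂ) volume :=
    (rotation a).measurePreserving
  have h2 : MeasurePreserving (⇑(rotation a)) dA dA := by
    refine ⟨h.measurable, ?_⟩
    rw [dA, Measure.map_smul, h.map_eq]
  have : (fun z : ℂ => (a : ℂ) * z) = ⇑(rotation a) := by
    funext z; simp [rotation_apply]
  rwa [this]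

lemma rot_emb (a : Circle) : MeasurableEmbedding (fun z : ℂ => (a : ℂ) * z) := by
  have : (fun z : ℂ => (a : ℂ) * z) = ⇑(rotation a) := by
    funext z; simp [rotation_apply]
  rw [this]
  exact (rotation a).toHomeomorph.measurableEmbedding

lemma rot_image_ball (a : Circle) (t : ℝ) :
    (fun z : ℂ => (a : ℂ) * z) '' Metric.ball (0:ℂ) t = Metric.ball (0:ℂ) t := by
  ext w
  simp only [Set.mem_image, Metric.mem_ball, Complex.dist_eq, sub_zero]
  constructor
  · rintro ⟨ζ, hζ, rfl⟩; simpa [Circle.norm_coe] using hζ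
  · intro hw
    exact ⟨(a : ℂ)⁻¹ * w, by simpa [Circle.norm_coe] using hw, by field_simp⟩

lemma rot_integral (a : Circle) (g : ℂ → ℂ) (t : ℝ) :
    ∫ ζ in Metric.ball (0:ℂ) t, g ((a : ℂ) * ζ) ∂dA
      = ∫ ζ in Metric.ball (0:ℂ) t, g ζ ∂dA := by
  conv_rhs => rw [← rot_image_ball a t]
  exact ((rot_measurePreserving a).setIntegral_image_emb (rot_emb a) g _).symm

lemma monomial_orth_aux (ω : ℂ → ℝ) (hrad : ∀ z : ℂ, ω z = ω ((‖z‖ : ℂ)))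
    (n k : ℕ) (hk : 0 < k) (t : ℝ) :
    ∫ ζ in Metric.ball (0:ℂ) t,
      (ζ ^ (n+k) * (starRingEnd ℂ ζ) ^ n * ((ω ζ : ℝ) : ℂ)) ∂dA = 0 := by
  set a : Circle := Circle.exp (Real.pi / k) with ha
  set g : ℂ → ℂ := fun ζ => ζ ^ (n+k) * (starRingEnd ℂ ζ) ^ n * ((ω ζ : ℝ) : ℂ) with hg
  have hconj : (starRingEnd ℂ) (a:ℂ) * (a:ℂ) = 1 := by
    rw [mul_comm, Complex.mul_conj']; simp [Circle.norm_coe]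
  have hneg : ((a:ℂ))^(n+k) * ((starRingEnd ℂ) (a:ℂ))^n = -1 := by
    have h1 : ((a:ℂ))^(n+k) * ((starRingEnd ℂ) (a:ℂ))^n
        = ((a:ℂ) * (starRingEnd ℂ) (a:ℂ))^n * (a:ℂ)^k := by ring
    rw [h1, mul_comm ((a:ℂ)) _, hconj, one_pow, one_mul]
    have h2 : ((a:ℂ)) = Complex.exp ((Real.pi / k : ℝ) * Complex.I) := by
      simp [ha, Circle.coe_exp]
    rw [h2, ← Complex.exp_nat_mul]
    have hkne : (k:ℝ) ≠ 0 := by positivity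
    have h3 : (k:ℂ) * ((Real.pi / k : ℝ) * Complex.I) = (Real.pi : ℂ) * Complex.I := by
      push_cast
      field_simp
      exact div_self (by exact_mod_cast hkne)
    rw [h3, Complex.exp_pi_mul_I]
  have hrot : ∀ ζ : ℂ, g ((a:ℂ) * ζ) = -g ζ := by
    intro ζ
    have hω : ω ((a:ℂ) * ζ) = ω ζ := by
      rw [hrad ((a:ℂ) * ζ), hrad ζ]
      congr 2
      simp [Circle.norm_coe]
    simp only [hg, map_mul, mul_pow, hω]
    have : ((a:ℂ))^(n+k) * ζ^(n+k) * (((starRingEnd ℂ) (a:ℂ))^n * ((starRingEnd ℂ) ζ)^n)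
        * ((ω ζ : ℝ) : ℂ)
        = (((a:ℂ))^(n+k) * ((starRingEnd ℂ) (a:ℂ))^n)
          * (ζ^(n+k) * ((starRingEnd ℂ) ζ)^n * ((ω ζ : ℝ) : ℂ)) := by ring
    rw [this, hneg]
    ring
  have h1 : ∫ ζ in Metric.ball (0:ℂ) t, g ζ ∂dA
      = - ∫ ζ in Metric.ball (0:ℂ) t, g ζ ∂dA := by
    conv_lhs => rw [← rot_integral a g t]
    simp only [hrot]
    rw [integral_neg]
  have h2 : (∫ ζ in Metric.ball (0:ℂ) t, g ζ ∂dA)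
      + ∫ ζ in Metric.ball (0:ℂ) t, g ζ ∂dA = 0 := by
    nth_rewrite 1 [h1]; ring
  exact add_self_eq_zero.mp h2

lemma monomial_orth (ω : ℂ → ℝ) (hrad : ∀ z : ℂ, ω z = ω ((‖z‖ : ℂ)))
    (m n : ℕ) (hmn : m ≠ n) (t : ℝ) :
    ∫ ζ in Metric.ball (0:ℂ) t,
      (ζ ^ m * (starRingEnd ℂ ζ) ^ n * ((ω ζ : ℝ) : ℂ)) ∂dA = 0 := by
  rcases lt_or_gt_of_ne hmn with h | h
  · -- m < n : take conjugate of the (n, m) case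
    obtain ⟨k, hk, rfl⟩ : ∃ k, 0 < k ∧ n = m + k :=
      ⟨n - m, by omega, by omega⟩
    have := monomial_orth_aux ω hrad m k hk t
    have hconj : ∫ ζ in Metric.ball (0:ℂ) t,
        (starRingEnd ℂ) (ζ ^ (m+k) * (starRingEnd ℂ ζ) ^ m * ((ω ζ : ℝ) : ℂ)) ∂dA = 0 := by
      rw [integral_conj, this, map_zero]
    have heq : ∫ ζ in Metric.ball (0:ℂ) t,
        (ζ ^ m * (starRingEnd ℂ ζ) ^ (m+k) * ((ω ζ : ℝ) : ℂ)) ∂dA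
        = ∫ ζ in Metric.ball (0:ℂ) t,
          (starRingEnd ℂ) (ζ ^ (m+k) * (starRingEnd ℂ ζ) ^ m * ((ω ζ : ℝ) : ℂ)) ∂dA := by
      apply integral_congr_ae
      apply Filter.Eventually.of_forall
      intro ζ
      simp only [map_mul, map_pow, Complex.conj_conj, Complex.conj_ofReal]
      ring
    rw [heq]
    exact hconj
  · obtain ⟨k, hk, rfl⟩ : ∃ k, 0 < k ∧ m = n + k := ⟨m - n, by omega, by omega⟩
    exact monomial_orth_aux ω hrad n k hk t

lemma tail_ii (hν : IsRadialWeight ν) {r : ℝ} (h0 : 0 ≤ r) (h1 : r < 1) :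
    IntervalIntegrable (fun s : ℝ => ν ((s:ℝ):ℂ)) volume r 1 := by
  by_contra h
  exact (hν.tailPos r h0 h1).ne' (intervalIntegral.integral_undef h)

lemma tail_nonneg (hν : IsRadialWeight ν) {r : ℝ} (h1 : r ≤ 1) : 0 ≤ wTail ν r :=
  intervalIntegral.integral_nonneg h1 (fun u _ => hν.nonneg _)

lemma tail_antitone (hν : IsRadialWeight ν) {a b : ℝ} (h0 : 0 ≤ a) (hab : a ≤ b)
    (hb : b ≤ 1) : wTail ν b ≤ wTail ν a := by
  rcases eq_or_lt_of_le (hab.trans hb) with h | h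
  · have : b = 1 := le_antisymm hb (h ▸ hab)
    rw [h, this]
  · have hii := tail_ii hν h0 h
    have hsub1 : Set.uIcc a b ⊆ Set.uIcc a 1 := by
      rw [Set.uIcc_of_le hab, Set.uIcc_of_le h.le]
      exact Set.Icc_subset_Icc le_rfl hb
    have hsub2 : Set.uIcc b 1 ⊆ Set.uIcc a 1 := by
      rw [Set.uIcc_of_le hb, Set.uIcc_of_le h.le]
      exact Set.Icc_subset_Icc hab le_rfl
    have hsplit := intervalIntegral.integral_add_adjacent_intervals
      (hii.mono_set hsub1) (hii.mono_set hsub2)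
    have hpos : 0 ≤ ∫ s in a..b, ν ((s:ℝ):ℂ) :=
      intervalIntegral.integral_nonneg hab (fun u _ => hν.nonneg _)
    unfold wTail
    linarith [hsplit]

lemma tail_continuousOn (hν : IsRadialWeight ν) :
    ContinuousOn (fun s : ℝ => wTail ν s) (Set.Icc 0 1) := by
  have hii := tail_ii hν le_rfl one_pos
  have hIcc : IntegrableOn (fun s : ℝ => ν ((s:ℝ):ℂ)) (Set.Icc 0 1) volume :=
    (integrableOn_Icc_iff_integrableOn_Ioc).mpr hii.1
  have hprim : ContinuousOn (fun x : ℝ => ∫ t in (0:ℝ)..x, ν ((t:ℝ):ℂ)) (Set.Icc 0 1) := by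
    have := intervalIntegral.continuousOn_primitive_interval
      (f := fun s : ℝ => ν ((s:ℝ):ℂ)) (a := 0) (b := 1) (μ := volume)
      (by rwa [Set.uIcc_of_le zero_le_one])
    rwa [Set.uIcc_of_le zero_le_one] at this
  have heq : ∀ s ∈ Set.Icc (0:ℝ) 1,
      wTail ν s = wTail ν 0 - ∫ t in (0:ℝ)..s, ν ((t:ℝ):ℂ) := by
    intro s hs
    obtain ⟨hs0, hs1⟩ := hs
    have hsub1 : Set.uIcc 0 s ⊆ Set.uIcc 0 1 := by
      rw [Set.uIcc_of_le hs0, Set.uIcc_of_le zero_le_one]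
      exact Set.Icc_subset_Icc le_rfl hs1
    have hsub2 : Set.uIcc s 1 ⊆ Set.uIcc 0 1 := by
      rw [Set.uIcc_of_le hs1, Set.uIcc_of_le zero_le_one]
      exact Set.Icc_subset_Icc hs0 le_rfl
    have := intervalIntegral.integral_add_adjacent_intervals
      (hii.mono_set hsub1) (hii.mono_set hsub2)
    unfold wTail
    linarith [this]
  exact (continuousOn_const.sub hprim).congr heq

lemma R_aesm (hω : IsRadialWeight ω) (hν : IsRadialWeight ν) :
    AEStronglyMeasurable (fun s : ℝ => ω ((s:ℝ):ℂ) * wTail ν s)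
      (volume.restrict (Set.Ioc (0:ℝ) 1)) := by
  apply AEStronglyMeasurable.mul
  · exact (tail_ii hω le_rfl one_pos).1.aestronglyMeasurable
  · exact ((tail_continuousOn hν).aestronglyMeasurable measurableSet_Icc).mono_measure
      (Measure.restrict_mono Set.Ioc_subset_Icc_self le_rfl)

lemma Q_ii (hω : IsRadialWeight ω) (hν : IsRadialWeight ν) {x : ℝ} (hx : 0 ≤ x) :
    IntervalIntegrable (fun s : ℝ => s ^ x * (ω ((s:ℝ):ℂ) * wTail ν s)) volume 0 1 := by
  rw [intervalIntegrable_iff_integrableOn_Ioc_of_le zero_le_one]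
  apply Integrable.mono' (g := fun s => wTail ν 0 * ω ((s:ℝ):ℂ))
    (((tail_ii hω le_rfl one_pos).1).const_mul _)
  · exact ((Real.continuous_rpow_const hx).aestronglyMeasurable.restrict).mul (R_aesm hω hν)
  · rw [ae_restrict_iff' measurableSet_Ioc]
    apply Filter.Eventually.of_forall
    intro s hs
    obtain ⟨hs0, hs1⟩ := hs
    have h1 : (0:ℝ) ≤ s ^ x := Real.rpow_nonneg hs0.le x
    have h2 : s ^ x ≤ 1 := Real.rpow_le_one hs0.le hs1 hx
    have h3 : 0 ≤ wTail ν s := tail_nonneg hν hs1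
    have h4 : wTail ν s ≤ wTail ν 0 := tail_antitone hν le_rfl hs0.le hs1
    have h5 : 0 ≤ ω ((s:ℝ):ℂ) := hω.nonneg _
    rw [Real.norm_eq_abs, abs_of_nonneg (by positivity)]
    calc s ^ x * (ω ((s:ℝ):ℂ) * wTail ν s) ≤ 1 * (ω ((s:ℝ):ℂ) * wTail ν 0) := by
          apply mul_le_mul h2 (mul_le_mul_of_nonneg_left h4 h5) (by positivity) one_pos.le
      _ = wTail ν 0 * ω ((s:ℝ):ℂ) := by ring

lemma R_ii (hω : IsRadialWeight ω) (hν : IsRadialWeight ν) :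
    IntervalIntegrable (fun s : ℝ => ω ((s:ℝ):ℂ) * wTail ν s) volume 0 1 := by
  have h := Q_ii hω hν (x := 0) le_rfl
  simpa [Real.rpow_zero] using h

lemma tau_pos (hω : IsRadialWeight ω) (hν : IsRadialWeight ν) {t : ℝ}
    (ht0 : 0 < t) (ht1 : t < 1) :
    0 < ∫ s in t..(1:ℝ), ω ((s:ℝ):ℂ) * wTail ν s := by
  have hii : IntervalIntegrable (fun s : ℝ => ω ((s:ℝ):ℂ) * wTail ν s) volume t 1 :=
    (R_ii hω hν).mono_set (by
      rw [Set.uIcc_of_le ht1.le, Set.uIcc_of_le zero_le_one]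
      exact Set.Icc_subset_Icc ht0.le le_rfl)
  have hnonneg : 0 ≤ ∫ s in t..(1:ℝ), ω ((s:ℝ):ℂ) * wTail ν s :=
    intervalIntegral.integral_nonneg ht1.le
      (fun u hu => mul_nonneg (hω.nonneg _) (tail_nonneg hν hu.2))
  rcases hnonneg.lt_or_eq with h | h
  · exact h
  exfalso
  -- the integral is zero: derive ω = 0 a.e. on Ioo t 1
  have hIoc : ∫ s in Set.Ioc t 1, ω ((s:ℝ):ℂ) * wTail ν s ∂volume = 0 := by
    rw [← intervalIntegral.integral_of_le ht1.le]
    exact h.symm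
  have hint : Integrable (fun s : ℝ => ω ((s:ℝ):ℂ) * wTail ν s)
      (volume.restrict (Set.Ioc t 1)) := by
    rw [← IntegrableOn]
    exact (intervalIntegrable_iff_integrableOn_Ioc_of_le ht1.le).mp hii
  have hae : (fun s : ℝ => ω ((s:ℝ):ℂ) * wTail ν s)
      =ᶠ[ae (volume.restrict (Set.Ioc t 1))] 0 := by
    apply (integral_eq_zero_iff_of_nonneg_ae _ hint).mp hIoc
    rw [Filter.EventuallyLE, ae_restrict_iff' measurableSet_Ioc]
    apply Filter.Eventually.of_forall
    intro s hs
    exact mul_nonneg (hω.nonneg _) (tail_nonneg hν hs.2)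
  have haeIoo : (fun s : ℝ => ω ((s:ℝ):ℂ)) =ᶠ[ae (volume.restrict (Set.Ioo t 1))] 0 := by
    have h1 : (fun s : ℝ => ω ((s:ℝ):ℂ) * wTail ν s)
        =ᶠ[ae (volume.restrict (Set.Ioo t 1))] 0 :=
      ae_restrict_of_ae_restrict_of_subset Set.Ioo_subset_Ioc_self hae
    rw [Filter.EventuallyEq, ae_restrict_iff' measurableSet_Ioo] at h1 ⊢
    filter_upwards [h1] with s h1 hs
    have hpos : 0 < wTail ν s := hν.tailPos s (ht0.le.trans hs.1.le) hs.2
    have := h1 hs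
    simp only [Pi.zero_apply] at this ⊢
    exact (mul_eq_zero.mp this).resolve_right hpos.ne'
  have : wTail ω t = 0 := by
    unfold wTail
    rw [intervalIntegral.integral_of_le ht1.le]
    rw [MeasureTheory.integral_Ioc_eq_integral_Ioo]
    exact integral_eq_zero_of_ae haeIoo
  exact (hω.tailPos t ht0.le ht1).ne' this

lemma moment_lb (hω : IsRadialWeight ω) (hν : IsRadialWeight ν) {t : ℝ}
    (ht0 : 0 < t) (ht1 : t < 1) (n : ℕ) :
    t ^ (2*n+1 : ℕ) * (∫ s in t..(1:ℝ), ω ((s:ℝ):ℂ) * wTail ν s)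
      ≤ wMoment (fun w => ω w * tailFun ν w) (2*(n:ℝ)+1) := by
  set x : ℝ := 2*(n:ℝ)+1 with hxdef
  have hx : 0 ≤ x := by positivity
  have hxnat : x = ((2*n+1 : ℕ) : ℝ) := by push_cast [hxdef]; ring
  have hcongr : wMoment (fun w => ω w * tailFun ν w) x
      = ∫ s in (0:ℝ)..1, s ^ x * (ω ((s:ℝ):ℂ) * wTail ν s) := by
    unfold wMoment tailFun
    apply intervalIntegral.integral_congr
    intro s hs
    rw [Set.uIcc_of_le zero_le_one] at hs
    simp only [Complex.norm_real, Real.norm_eq_abs, abs_of_nonneg hs.1]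
  have hQ := Q_ii hω hν hx
  have hsub1 : Set.uIcc 0 t ⊆ Set.uIcc (0:ℝ) 1 := by
    rw [Set.uIcc_of_le ht0.le, Set.uIcc_of_le zero_le_one]
    exact Set.Icc_subset_Icc le_rfl ht1.le
  have hsub2 : Set.uIcc t 1 ⊆ Set.uIcc (0:ℝ) 1 := by
    rw [Set.uIcc_of_le ht1.le, Set.uIcc_of_le zero_le_one]
    exact Set.Icc_subset_Icc ht0.le le_rfl
  have hsplit := intervalIntegral.integral_add_adjacent_intervals
    (hQ.mono_set hsub1) (hQ.mono_set hsub2)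
  have h1 : 0 ≤ ∫ s in (0:ℝ)..t, s ^ x * (ω ((s:ℝ):ℂ) * wTail ν s) := by
    apply intervalIntegral.integral_nonneg ht0.le
    intro u hu
    have := Real.rpow_nonneg hu.1 x
    have := tail_nonneg hν (hu.2.trans ht1.le)
    have := hω.nonneg ((u:ℝ):ℂ)
    positivity
  have h2 : ∫ s in t..(1:ℝ), t ^ x * (ω ((s:ℝ):ℂ) * wTail ν s)
      ≤ ∫ s in t..(1:ℝ), s ^ x * (ω ((s:ℝ):ℂ) * wTail ν s) := by
    apply intervalIntegral.integral_mono_on ht1.le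
      (((R_ii hω hν).mono_set hsub2).const_mul _) (hQ.mono_set hsub2)
    intro u hu
    apply mul_le_mul_of_nonneg_right (Real.rpow_le_rpow ht0.le hu.1 hx)
    exact mul_nonneg (hω.nonneg _) (tail_nonneg hν hu.2)
  rw [intervalIntegral.integral_const_mul] at h2
  have hpow : t ^ (2*n+1 : ℕ) = t ^ x := by
    rw [hxnat, Real.rpow_natCast]
  rw [hpow, hcongr]
  linarith

lemma Mn_pos (hω : IsRadialWeight ω) (hν : IsRadialWeight ν) (n : ℕ) :
    0 < wMoment (fun w => ω w * tailFun ν w) (2*(n:ℝ)+1) := by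
  have h1 := moment_lb hω hν (t := 1/2) (by norm_num) (by norm_num) n
  have h2 := tau_pos hω hν (t := 1/2) (by norm_num) (by norm_num)
  calc (0:ℝ) < (1/2) ^ (2*n+1 : ℕ) * (∫ s in (1/2:ℝ)..1, ω ((s:ℝ):ℂ) * wTail ν s) := by
        positivity
    _ ≤ _ := h1

lemma coeff_summable (hω : IsRadialWeight ω) (hν : IsRadialWeight ν) {z : ℂ}
    (hz : ‖z‖ < 1) :
    Summable (fun n : ℕ =>
      ‖z‖ ^ n / (2 * wMoment (fun w => ω w * tailFun ν w) (2*(n:ℝ)+1))) := by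
  set u : ℝ := (1 + ‖z‖) / 2 with hu
  have hz0 := norm_nonneg z
  have hu1 : u < 1 := by simp only [hu]; linarith
  have hzu : ‖z‖ < u := by simp only [hu]; linarith
  have hu0 : 0 < u := by positivity
  set t : ℝ := Real.sqrt u with htdef
  have ht0 : 0 < t := Real.sqrt_pos.mpr hu0
  have ht1 : t < 1 := by
    rw [htdef, show (1:ℝ) = Real.sqrt 1 by simp]
    exact Real.sqrt_lt_sqrt hu0.le hu1
  have ht2 : t^2 = u := Real.sq_sqrt hu0.le
  set τ : ℝ := ∫ s in t..(1:ℝ), ω ((s:ℝ):ℂ) * wTail ν s with hτ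
  have hτ0 : 0 < τ := tau_pos hω hν ht0 ht1
  have hgsum : Summable (fun n : ℕ => (‖z‖ / u)^n * (1 / (2 * t * τ))) := by
    apply Summable.mul_right
    apply summable_geometric_of_lt_one (by positivity)
    rw [div_lt_one hu0]
    exact hzu
  apply Summable.of_nonneg_of_le _ _ hgsum
  · intro n
    have := (Mn_pos hω hν n).le
    positivity
  · intro n
    have hMn := Mn_pos hω hν n
    have hlb := moment_lb hω hν ht0 ht1 n
    rw [← hτ] at hlb
    have htn : t ^ (2*n+1 : ℕ) * τ = (u^n * t) * τ := by
      rw [show (2*n+1 : ℕ) = 2*n+1 from rfl, pow_succ, pow_mul, ht2]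
    have hden : 0 < t ^ (2*n+1 : ℕ) * τ := by positivity
    calc ‖z‖ ^ n / (2 * wMoment (fun w => ω w * tailFun ν w) (2*(n:ℝ)+1))
        ≤ ‖z‖ ^ n / (2 * (t ^ (2*n+1 : ℕ) * τ)) := by
          apply div_le_div_of_nonneg_left (by positivity) (by positivity)
          linarith
      _ = (‖z‖ / u)^n * (1 / (2 * t * τ)) := by
          have key : ∀ A B C D : ℝ, A^n / (2*(B^n*C*D)) = (A/B)^n * (1/(2*C*D)) := by
            intro A B C D
            rw [div_pow, div_mul_div_comm]
            congr 1 <;> ring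
          rw [htn]
          exact key (‖z‖) u t τ



lemma exists_coeffs {f : ℂ → ℂ} (hf : DifferentiableOn ℂ f (Metric.ball (0:ℂ) 1)) :
    ∃ a : ℕ → ℂ, (∀ s : ℝ, 0 ≤ s → s < 1 → Summable fun m => ‖a m‖ * s ^ m) ∧
      ∀ y : ℂ, ‖y‖ < 1 → HasSum (fun m => a m * y ^ m) (f y) := by
  -- base series at radius 1/2
  have hdiff : ∀ R : NNReal, (R:ℝ) < 1 → 0 < R →
      HasFPowerSeriesOnBall f (cauchyPowerSeries f 0 R) 0 R := by
    intro R hR1 hR0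
    exact (hf.mono (closedBall_subset_ball hR1)).hasFPowerSeriesOnBall hR0
  set p := cauchyPowerSeries f 0 ((1/2 : NNReal) : ℝ) with hp
  have hbase : HasFPowerSeriesOnBall f p 0 ((1/2 : NNReal)) := hdiff (1/2) (by norm_num) (by norm_num)
  have huniq : ∀ R : NNReal, (R:ℝ) < 1 → 0 < R → cauchyPowerSeries f 0 R = p := by
    intro R hR1 hR0
    exact ((hdiff R hR1 hR0).hasFPowerSeriesAt.eq_formalMultilinearSeries
      hbase.hasFPowerSeriesAt)
  have hradius : 1 ≤ p.radius := by
    apply ENNReal.le_of_forall_nnreal_lt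
    intro r hr
    have hr1 : (r:ℝ) < 1 := by exact_mod_cast hr
    set R : NNReal := max r (1/2) with hR
    have hR1 : (R:ℝ) < 1 := by
      simp only [hR, NNReal.coe_max]
      apply max_lt hr1; norm_num
    have hR0 : 0 < R := by
      simp only [hR]
      exact lt_max_of_lt_right (by norm_num)
    have := (hdiff R hR1 hR0).r_le
    rw [huniq R hR1 hR0] at this
    calc (r : ENNReal) ≤ (R : ENNReal) := by exact_mod_cast le_max_left r (1/2)
    _ ≤ p.radius := this
  refine ⟨fun m => p.coeff m, ?_, ?_⟩
  · intro s hs0 hs1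
    have hsum := p.summable_norm_mul_pow (r := ⟨s, hs0⟩)
      (lt_of_lt_of_le (ENNReal.coe_lt_one_iff.mpr (by exact_mod_cast hs1)) hradius)
    apply Summable.of_nonneg_of_le (fun m => by positivity) _ hsum
    intro m
    apply mul_le_mul_of_nonneg_right _ (by positivity)
    calc ‖p.coeff m‖ = ‖p m fun _ => 1‖ := rfl
    _ ≤ ‖p m‖ * ∏ _i : Fin m, ‖(1:ℂ)‖ := (p m).le_opNorm _
    _ = ‖p m‖ := by simp
  · intro y hy
    set s : ℝ := (1 + ‖y‖) / 2 with hs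
    have hs0 : (0:ℝ) < s := by positivity
    have hs1 : s < 1 := by
      simp only [hs]
      nlinarith [norm_nonneg y]
    have hys : ‖y‖ < s := by
      simp only [hs]; nlinarith
    set R : NNReal := ⟨s, hs0.le⟩ with hR
    have hball := hdiff R (by exact_mod_cast hs1) (by exact_mod_cast hs0)
    rw [huniq R (by exact_mod_cast hs1) (by exact_mod_cast hs0)] at hball
    have hnn : ‖y‖₊ < R := by
      rw [← NNReal.coe_lt_coe]
      exact hys
    have hmem : y ∈ Metric.eball (0:ℂ) R := by
      rw [Metric.mem_eball, edist_zero_right]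
      exact_mod_cast hnn
    have := hball.hasSum hmem
    simp only [zero_add] at this
    have heq : ∀ m, (p m fun _ => y) = p.coeff m * y ^ m := by
      intro m
      rw [FormalMultilinearSeries.apply_eq_pow_smul_coeff, smul_eq_mul]
      ring
    simpa only [heq] using this

lemma unitDisc_eq_ball : unitDisc = Metric.ball (0:ℂ) 1 := by
  ext z; simp [unitDisc, Metric.mem_ball, Complex.dist_eq]

lemma measurableSet_unitDisc : MeasurableSet unitDisc := by
  rw [unitDisc_eq_ball]; exact Metric.isOpen_ball.measurableSet

lemma mem_ball_abs {t : ℝ} {ζ : ℂ} (h : ζ ∈ Metric.ball (0:ℂ) t) : ‖ζ‖ < t := by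
  simpa [Complex.dist_eq] using h


lemma omega_aesm {ω : ℂ → ℝ} (hω : IsRadialWeight ω) {s : Set ℂ} (hsub : s ⊆ unitDisc) :
    AEStronglyMeasurable (fun ζ => ((ω ζ : ℝ) : ℂ)) (dA.restrict s) :=
  (Complex.continuous_ofReal.comp_aestronglyMeasurable
    hω.integrable.aestronglyMeasurable).mono_measure (Measure.restrict_mono hsub le_rfl)

lemma integrableOn_dom {s : Set ℂ} (hs : MeasurableSet s) {h : ℂ → ℂ}
    (hm : AEStronglyMeasurable h (dA.restrict s)) {g : ℂ → ℝ}
    (hg : IntegrableOn g s dA) (hb : ∀ ζ ∈ s, ‖h ζ‖ ≤ g ζ) : IntegrableOn h s dA :=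
  Integrable.mono' hg hm ((ae_restrict_iff' hs).2 (Filter.Eventually.of_forall hb))

lemma expand {ω : ℂ → ℝ} (hω : IsRadialWeight ω) {f : ℂ → ℂ} {a : ℕ → ℂ}
    (hsum : ∀ s : ℝ, 0 ≤ s → s < 1 → Summable fun m => ‖a m‖ * s ^ m)
    (hrep : ∀ y : ℂ, ‖y‖ < 1 → HasSum (fun m => a m * y ^ m) (f y))
    (n : ℕ) {ρ t : ℝ} (hρ0 : 0 < ρ) (hρ1 : ρ ≤ 1) (ht0 : 0 < t) (ht1 : t ≤ 1)
    (hρt : ρ * t < 1) :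
    ∫ ζ in Metric.ball (0:ℂ) t, f ((ρ:ℂ) * ζ) * (starRingEnd ℂ ζ)^n * ((ω ζ:ℝ):ℂ) ∂dA
      = (a n * (ρ:ℂ)^n) *
        ∫ ζ in Metric.ball (0:ℂ) t, ζ^n * (starRingEnd ℂ ζ)^n * ((ω ζ:ℝ):ℂ) ∂dA := by
  have hsub : Metric.ball (0:ℂ) t ⊆ unitDisc := by
    rw [unitDisc_eq_ball]; exact Metric.ball_subset_ball ht1
  have hs : MeasurableSet (Metric.ball (0:ℂ) t) := Metric.isOpen_ball.measurableSet
  set F : ℕ → ℂ → ℂ :=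
    fun m ζ => (a m * (ρ:ℂ)^m * (ζ^m * (starRingEnd ℂ ζ)^n)) * ((ω ζ:ℝ):ℂ) with hF
  -- pointwise identity
  have hpt : ∀ ζ ∈ Metric.ball (0:ℂ) t,
      f ((ρ:ℂ) * ζ) * (starRingEnd ℂ ζ)^n * ((ω ζ:ℝ):ℂ) = ∑' m, F m ζ := by
    intro ζ hζ
    have hy : ‖(ρ:ℂ) * ζ‖ < 1 := by
      rw [norm_mul, Complex.norm_real, Real.norm_eq_abs, abs_of_pos hρ0]
      calc ρ * ‖ζ‖ < ρ * t := by
            exact mul_lt_mul_of_pos_left (mem_ball_abs hζ) hρ0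
        _ < 1 := hρt
    have h1 := (hrep _ hy).mul_right ((starRingEnd ℂ ζ)^n * ((ω ζ:ℝ):ℂ))
    have h2 : ∀ m, a m * ((ρ:ℂ) * ζ)^m * ((starRingEnd ℂ ζ)^n * ((ω ζ:ℝ):ℂ)) = F m ζ := by
      intro m; simp only [hF, mul_pow]; ring
    rw [mul_assoc]
    simp only [h2] at h1
    exact h1.tsum_eq.symm
  -- integrability of each term
  have hFint : ∀ m, IntegrableOn (F m) (Metric.ball (0:ℂ) t) dA := by
    intro m
    apply integrableOn_dom hs
    · apply AEStronglyMeasurable.mul _ (omega_aesm hω hsub)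
      exact (Continuous.aestronglyMeasurable (by continuity)).restrict
    · exact (hω.integrable.mono_set hsub).const_mul (‖a m‖ * ρ^m)
    · intro ζ hζ
      have habs1 : ‖ζ‖ ≤ 1 := le_of_lt (lt_of_lt_of_le (mem_ball_abs hζ) ht1)
      have hb1 : (‖ζ‖)^m * (‖ζ‖)^n ≤ 1 :=
        mul_le_one₀ (pow_le_one₀ (norm_nonneg ζ) habs1) (by positivity)
          (pow_le_one₀ (norm_nonneg ζ) habs1)
      have : ‖F m ζ‖ = ‖a m‖ * ρ^m * ((‖ζ‖)^m * (‖ζ‖)^n) * ω ζ := by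
        simp only [hF, norm_mul, norm_pow, map_mul, map_pow, Complex.norm_conj,
          Complex.norm_real, Real.norm_eq_abs, abs_of_nonneg (hω.nonneg ζ), abs_of_pos hρ0]
      rw [this]
      exact mul_le_mul_of_nonneg_right
        (mul_le_of_le_one_right (by positivity) hb1) (hω.nonneg ζ)
  -- bound on the integrals of norms
  have hnormbd : ∀ m, (∫ ζ in Metric.ball (0:ℂ) t, ‖F m ζ‖ ∂dA)
      ≤ ‖a m‖ * (ρ*t)^m * ∫ ζ in Metric.ball (0:ℂ) t, ω ζ ∂dA := by
    intro m
    have h1 : (∫ ζ in Metric.ball (0:ℂ) t, ‖F m ζ‖ ∂dA)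
        ≤ ∫ ζ in Metric.ball (0:ℂ) t, (‖a m‖ * (ρ*t)^m) * ω ζ ∂dA := by
      apply integral_mono_ae (hFint m).norm
        ((hω.integrable.mono_set hsub).const_mul _)
      rw [Filter.EventuallyLE, ae_restrict_iff' hs]
      apply Filter.Eventually.of_forall
      intro ζ hζ
      have habs0 := norm_nonneg ζ
      have habst : ‖ζ‖ ≤ t := le_of_lt (mem_ball_abs hζ)
      have habs1 : ‖ζ‖ ≤ 1 := le_trans habst ht1
      have hb1 : (‖ζ‖)^m ≤ t^m := pow_le_pow_left₀ habs0 habst m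
      have hb2 : (‖ζ‖)^n ≤ 1 := pow_le_one₀ habs0 habs1
      have heq : ‖F m ζ‖ = ‖a m‖ * ρ^m * ((‖ζ‖)^m * (‖ζ‖)^n) * ω ζ := by
        simp only [hF, norm_mul, norm_pow, map_mul, map_pow, Complex.norm_conj,
          Complex.norm_real, Real.norm_eq_abs, abs_of_nonneg (hω.nonneg ζ), abs_of_pos hρ0]
      rw [heq, mul_pow]
      have : (‖ζ‖)^m * (‖ζ‖)^n ≤ t^m * 1 := by
        apply mul_le_mul hb1 hb2 (by positivity) (by positivity)
      calc ‖a m‖ * ρ^m * ((‖ζ‖)^m * (‖ζ‖)^n) * ω ζ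
          ≤ ‖a m‖ * ρ^m * (t^m * 1) * ω ζ :=
            mul_le_mul_of_nonneg_right
              (mul_le_mul_of_nonneg_left this (by positivity)) (hω.nonneg ζ)
        _ = ‖a m‖ * (ρ^m * t^m) * ω ζ := by ring
    calc (∫ ζ in Metric.ball (0:ℂ) t, ‖F m ζ‖ ∂dA)
        ≤ ∫ ζ in Metric.ball (0:ℂ) t, (‖a m‖ * (ρ*t)^m) * ω ζ ∂dA := h1
      _ = ‖a m‖ * (ρ*t)^m * ∫ ζ in Metric.ball (0:ℂ) t, ω ζ ∂dA := by
          rw [integral_const_mul]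
  have hsummable : Summable (fun m => ∫ ζ in Metric.ball (0:ℂ) t, ‖F m ζ‖ ∂dA) := by
    apply Summable.of_nonneg_of_le
      (fun m => integral_nonneg (fun ζ => norm_nonneg _)) hnormbd
    exact (hsum (ρ*t) (by positivity) hρt).mul_right _
  have hswap := integral_tsum_of_summable_integral_norm hFint hsummable
  have hterm : ∀ m, ∫ ζ in Metric.ball (0:ℂ) t, F m ζ ∂dA
      = (a m * (ρ:ℂ)^m) *
        ∫ ζ in Metric.ball (0:ℂ) t, ζ^m * (starRingEnd ℂ ζ)^n * ((ω ζ:ℝ):ℂ) ∂dA := by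
    intro m
    have heq : ∀ ζ : ℂ, F m ζ
        = (a m * (ρ:ℂ)^m) * (ζ^m * (starRingEnd ℂ ζ)^n * ((ω ζ:ℝ):ℂ)) := by
      intro ζ; simp only [hF]; ring
    simp only [heq]
    exact integral_const_mul _ _
  rw [setIntegral_congr_fun hs hpt, ← hswap]
  simp only [hterm]
  exact tsum_eq_single n (fun m hm => by rw [monomial_orth ω hω.radial m n hm t, mul_zero])


lemma dilate {ω : ℂ → ℝ} (hω : IsRadialWeight ω) {f : ℂ → ℂ}
    (hf : DifferentiableOn ℂ f (Metric.ball (0:ℂ) 1))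
    (hfL1 : IntegrableOn (fun z => ‖f z‖ * ω z) unitDisc dA)
    (n : ℕ) {r : ℝ} (hr0 : 0 < r) (hr1 : r < 1) :
    ∫ ζ in unitDisc, f ((r:ℂ) * ζ) * (starRingEnd ℂ ζ)^n * ((ω ζ:ℝ):ℂ) ∂dA
      = (r:ℂ)^n * ∫ ζ in unitDisc, f ζ * (starRingEnd ℂ ζ)^n * ((ω ζ:ℝ):ℂ) ∂dA := by
  obtain ⟨a, hsum, hrep⟩ := exists_coeffs hf
  have h1 : ∫ ζ in unitDisc, f ((r:ℂ) * ζ) * (starRingEnd ℂ ζ)^n * ((ω ζ:ℝ):ℂ) ∂dA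
      = (a n * (r:ℂ)^n) *
        ∫ ζ in Metric.ball (0:ℂ) 1, ζ^n * (starRingEnd ℂ ζ)^n * ((ω ζ:ℝ):ℂ) ∂dA := by
    rw [unitDisc_eq_ball]
    exact expand hω hsum hrep n hr0 hr1.le one_pos le_rfl (by simpa using hr1)
  set tk : ℕ → ℝ := fun k => 1 - 1/(k+2) with htk
  have htk0 : ∀ k, 0 < tk k := by
    intro k
    have h2 : 1/((k:ℝ)+2) ≤ 1/2 := by
      apply div_le_div_of_nonneg_left (by norm_num) (by norm_num)
      · push_cast; linarith
    simp only [htk]; linarith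
  have htk1 : ∀ k, tk k < 1 := by
    intro k
    have : 0 < 1/((k:ℝ)+2) := by positivity
    simp only [htk]; linarith
  have h2 : ∀ k, ∫ ζ in Metric.ball (0:ℂ) (tk k),
      f ζ * (starRingEnd ℂ ζ)^n * ((ω ζ:ℝ):ℂ) ∂dA
      = a n * ∫ ζ in Metric.ball (0:ℂ) (tk k),
          ζ^n * (starRingEnd ℂ ζ)^n * ((ω ζ:ℝ):ℂ) ∂dA := by
    intro k
    have := expand hω hsum hrep n one_pos le_rfl (htk0 k) (htk1 k).le
      (by simpa using htk1 k)
    simpa using this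
  have hmono : Monotone (fun k => Metric.ball (0:ℂ) (tk k)) := by
    intro k l hkl
    apply Metric.ball_subset_ball
    have hc : (k:ℝ) ≤ (l:ℝ) := Nat.cast_le.mpr hkl
    have : 1/((l:ℝ)+2) ≤ 1/((k:ℝ)+2) :=
      div_le_div_of_nonneg_left (by norm_num) (by positivity) (by linarith)
    simp only [htk]; linarith
  have hunion : (⋃ k, Metric.ball (0:ℂ) (tk k)) = Metric.ball (0:ℂ) 1 := by
    ext z
    simp only [Set.mem_iUnion, Metric.mem_ball, Complex.dist_eq, sub_zero]
    constructor
    · rintro ⟨k, hk⟩; exact lt_of_lt_of_le hk (htk1 k).le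
    · intro hz
      obtain ⟨k, hk⟩ := exists_nat_one_div_lt (show (0:ℝ) < 1 - ‖z‖ by linarith)
      refine ⟨k, ?_⟩
      have : 1/((k:ℝ)+2) < 1/((k:ℝ)+1) := by
        apply div_lt_div_of_pos_left (by norm_num) (by positivity) (by linarith)
      have hk' : 1 / ((k:ℝ) + 1) < 1 - ‖z‖ := by exact_mod_cast hk
      simp only [htk]; linarith
  have hmeas : ∀ k, MeasurableSet (Metric.ball (0:ℂ) (tk k)) :=
    fun k => Metric.isOpen_ball.measurableSet
  have hint_f : IntegrableOn (fun ζ => f ζ * (starRingEnd ℂ ζ)^n * ((ω ζ:ℝ):ℂ))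
      unitDisc dA := by
    apply integrableOn_dom measurableSet_unitDisc _ hfL1
    · intro ζ hζ
      have habs1 : ‖ζ‖ ≤ 1 := le_of_lt hζ
      have : ‖f ζ * (starRingEnd ℂ ζ)^n * ((ω ζ:ℝ):ℂ)‖
          = ‖f ζ‖ * (‖ζ‖)^n * ω ζ := by
        simp only [norm_mul, norm_pow, map_pow, Complex.norm_conj,
          Complex.norm_real, Real.norm_eq_abs, abs_of_nonneg (hω.nonneg ζ)]
      rw [this]
      have hb : (‖ζ‖)^n ≤ 1 := pow_le_one₀ (norm_nonneg ζ) habs1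
      calc ‖f ζ‖ * (‖ζ‖)^n * ω ζ
          ≤ ‖f ζ‖ * 1 * ω ζ :=
            mul_le_mul_of_nonneg_right
              (mul_le_mul_of_nonneg_left hb (norm_nonneg _)) (hω.nonneg ζ)
        _ = ‖f ζ‖ * ω ζ := by ring
    · apply AEStronglyMeasurable.mul _ (omega_aesm hω (le_refl _))
      apply AEStronglyMeasurable.mul
      · exact ((hf.continuousOn.mono (by rw [unitDisc_eq_ball])).aestronglyMeasurable
          measurableSet_unitDisc)
      · exact (Continuous.aestronglyMeasurable (by continuity)).restrict
  have hint_mono : IntegrableOn (fun ζ => ζ^n * (starRingEnd ℂ ζ)^n * ((ω ζ:ℝ):ℂ))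
      unitDisc dA := by
    apply integrableOn_dom measurableSet_unitDisc _ (hω.integrable)
    swap
    · exact (Continuous.aestronglyMeasurable (by continuity)).restrict.mul
        (omega_aesm hω (le_refl _))
    intro ζ hζ
    have habs1 : ‖ζ‖ ≤ 1 := le_of_lt hζ
    have : ‖ζ^n * (starRingEnd ℂ ζ)^n * ((ω ζ:ℝ):ℂ)‖
        = (‖ζ‖)^n * (‖ζ‖)^n * ω ζ := by
      simp only [norm_mul, norm_pow, map_pow, Complex.norm_conj,
        Complex.norm_real, Real.norm_eq_abs, abs_of_nonneg (hω.nonneg ζ)]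
    rw [this]
    have hb : (‖ζ‖)^n * (‖ζ‖)^n ≤ 1 :=
      mul_le_one₀ (pow_le_one₀ (norm_nonneg ζ) habs1) (by positivity)
        (pow_le_one₀ (norm_nonneg ζ) habs1)
    calc (‖ζ‖)^n * (‖ζ‖)^n * ω ζ ≤ 1 * ω ζ :=
          mul_le_mul_of_nonneg_right hb (hω.nonneg ζ)
      _ = ω ζ := one_mul _
  have tendA : Filter.Tendsto
      (fun k => ∫ ζ in Metric.ball (0:ℂ) (tk k),
        f ζ * (starRingEnd ℂ ζ)^n * ((ω ζ:ℝ):ℂ) ∂dA) Filter.atTop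
      (nhds (∫ ζ in unitDisc, f ζ * (starRingEnd ℂ ζ)^n * ((ω ζ:ℝ):ℂ) ∂dA)) := by
    have := tendsto_setIntegral_of_monotone hmeas hmono
      (by rw [hunion, ← unitDisc_eq_ball]; exact hint_f)
    rwa [hunion, ← unitDisc_eq_ball] at this
  have tendB : Filter.Tendsto
      (fun k => a n * ∫ ζ in Metric.ball (0:ℂ) (tk k),
        ζ^n * (starRingEnd ℂ ζ)^n * ((ω ζ:ℝ):ℂ) ∂dA) Filter.atTop
      (nhds (a n * ∫ ζ in Metric.ball (0:ℂ) 1,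
        ζ^n * (starRingEnd ℂ ζ)^n * ((ω ζ:ℝ):ℂ) ∂dA)) := by
    apply Filter.Tendsto.const_mul
    have := tendsto_setIntegral_of_monotone hmeas hmono
      (by rw [hunion, ← unitDisc_eq_ball]; exact hint_mono)
    rwa [hunion] at this
  have key : ∫ ζ in unitDisc, f ζ * (starRingEnd ℂ ζ)^n * ((ω ζ:ℝ):ℂ) ∂dA
      = a n * ∫ ζ in Metric.ball (0:ℂ) 1,
          ζ^n * (starRingEnd ℂ ζ)^n * ((ω ζ:ℝ):ℂ) ∂dA := by
    apply tendsto_nhds_unique _ tendB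
    convert tendA using 2 with k
    exact (h2 k).symm
  rw [h1, key]
  ring


lemma kernel_swap (hω : IsRadialWeight ω) (hν : IsRadialWeight ν) {z : ℂ}
    (hz : ‖z‖ < 1) {g : ℂ → ℂ}
    (hgm : AEStronglyMeasurable g (dA.restrict unitDisc))
    (hgL1 : IntegrableOn (fun ζ => ‖g ζ‖ * ω ζ) unitDisc dA) :
    ∫ ζ in unitDisc, g ζ * starRingEnd ℂ (bergmanKernel (fun w => ω w * tailFun ν w) z ζ)
        * ((ω ζ:ℝ):ℂ) ∂dA
      = ∑' n : ℕ, (z^n / (2 * ((wMoment (fun w => ω w * tailFun ν w) (2*(n:ℝ)+1) : ℝ):ℂ))) *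
          ∫ ζ in unitDisc, g ζ * (starRingEnd ℂ ζ)^n * ((ω ζ:ℝ):ℂ) ∂dA := by
  have hMpos : ∀ n : ℕ, 0 < wMoment (fun w => ω w * tailFun ν w) (2*(n:ℝ)+1) :=
    fun n => Mn_pos hω hν n
  set M : ℕ → ℝ := fun n => wMoment (fun w => ω w * tailFun ν w) (2*(n:ℝ)+1) with hM
  set H : ℕ → ℂ → ℂ := fun n ζ =>
    (z^n / (2 * ((M n : ℝ):ℂ))) * (g ζ * (starRingEnd ℂ ζ)^n * ((ω ζ:ℝ):ℂ)) with hH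
  have hker : ∀ ζ : ℂ, (starRingEnd ℂ) (bergmanKernel (fun w => ω w * tailFun ν w) z ζ)
      = ∑' n : ℕ, (z * (starRingEnd ℂ ζ))^n / (2 * ((M n : ℝ):ℂ)) := by
    intro ζ
    unfold bergmanKernel
    rw [show (starRingEnd ℂ) (∑' n : ℕ, (starRingEnd ℂ z * ζ)^n /
          (2 * ((wMoment (fun w => ω w * tailFun ν w) (2*(n:ℝ)+1) : ℝ):ℂ)))
        = ∑' n : ℕ, (starRingEnd ℂ) ((starRingEnd ℂ z * ζ)^n /
          (2 * ((wMoment (fun w => ω w * tailFun ν w) (2*(n:ℝ)+1) : ℝ):ℂ))) from tsum_star]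
    apply tsum_congr
    intro n
    rw [map_div₀, map_pow, map_mul, Complex.conj_conj, map_mul, Complex.conj_ofReal,
      map_ofNat]
  have hpt : ∀ ζ : ℂ,
      g ζ * (starRingEnd ℂ) (bergmanKernel (fun w => ω w * tailFun ν w) z ζ) * ((ω ζ:ℝ):ℂ)
      = ∑' n, H n ζ := by
    intro ζ
    rw [hker ζ, mul_comm (g ζ), mul_assoc, ← tsum_mul_right]
    apply tsum_congr
    intro n
    simp only [hH, mul_pow]
    ring
  have habs2M : ∀ n : ℕ, ‖z^n / (2 * ((M n : ℝ):ℂ))‖ = ‖z‖ ^ n / (2 * M n) := by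
    intro n
    rw [norm_div, norm_pow, norm_mul,
      Complex.norm_two, Complex.norm_real, Real.norm_eq_abs, abs_of_pos (hMpos n)]
  have hbound : ∀ n : ℕ, ∀ ζ ∈ unitDisc,
      ‖H n ζ‖ ≤ (‖z‖ ^ n / (2 * M n)) * (‖g ζ‖ * ω ζ) := by
    intro n ζ hζ
    have habs1 : ‖ζ‖ ≤ 1 := le_of_lt hζ
    have h1 : ‖H n ζ‖ = (‖z‖ ^ n / (2 * M n)) *
        (‖g ζ‖ * (‖ζ‖ ^ n * ω ζ)) := by
      simp only [hH, norm_mul, habs2M n, norm_pow, map_pow, Complex.norm_conj,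
        Complex.norm_real, Real.norm_eq_abs, abs_of_nonneg (hω.nonneg ζ)]
      ring
    rw [h1]
    have h2 : ‖ζ‖ ^ n * ω ζ ≤ 1 * ω ζ :=
      mul_le_mul_of_nonneg_right (pow_le_one₀ (norm_nonneg ζ) habs1) (hω.nonneg ζ)
    have h3 : 0 ≤ ‖z‖ ^ n / (2 * M n) := by
      have := (hMpos n).le; positivity
    apply mul_le_mul_of_nonneg_left _ h3
    calc ‖g ζ‖ * (‖ζ‖ ^ n * ω ζ)
        ≤ ‖g ζ‖ * (1 * ω ζ) :=
          mul_le_mul_of_nonneg_left h2 (norm_nonneg _)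
      _ = ‖g ζ‖ * ω ζ := by ring
  have hHint : ∀ n : ℕ, IntegrableOn (H n) unitDisc dA := by
    intro n
    apply integrableOn_dom measurableSet_unitDisc _
      (hgL1.const_mul (‖z‖ ^ n / (2 * M n))) (hbound n)
    apply AEStronglyMeasurable.const_mul
    exact (hgm.mul (Continuous.aestronglyMeasurable (by continuity)).restrict).mul
      (omega_aesm hω (le_refl _))
  have hsummable : Summable (fun n : ℕ => ∫ ζ in unitDisc, ‖H n ζ‖ ∂dA) := by
    apply Summable.of_nonneg_of_le
      (fun n => integral_nonneg fun ζ => norm_nonneg _) _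
      ((coeff_summable hω hν hz).mul_right
        (∫ ζ in unitDisc, ‖g ζ‖ * ω ζ ∂dA))
    intro n
    have h1 : ∫ ζ in unitDisc, ‖H n ζ‖ ∂dA
        ≤ ∫ ζ in unitDisc, (‖z‖ ^ n / (2 * M n)) * (‖g ζ‖ * ω ζ) ∂dA := by
      apply integral_mono_ae (hHint n).norm (hgL1.const_mul _)
      rw [Filter.EventuallyLE, ae_restrict_iff' measurableSet_unitDisc]
      exact Filter.Eventually.of_forall (hbound n)
    rwa [integral_const_mul] at h1
  rw [setIntegral_congr_fun measurableSet_unitDisc (fun ζ _ => hpt ζ),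
    ← integral_tsum_of_summable_integral_norm hHint hsummable]
  apply tsum_congr
  intro n
  simp only [hH]
  exact integral_const_mul _ _


end Stmt13Aux

/-- the dilations f_r do not increase ‖V_{ω,ν̂}(·)‖_∞. -/
theorem stmt_13 (ω ν : ℂ → ℝ) (hω : IsRadialWeight ω) (hν : IsRadialWeight ν)
    (f : ℂ → ℂ) (hf : DifferentiableOn ℂ f unitDisc)
    (hfL1 : IntegrableOn (fun z => ‖f z‖ * ω z) unitDisc dA)
    (hbdd : BddAbove (VSet ω (tailFun ν) f)) :
    ∀ r : ℝ, 0 < r → r < 1 → ∀ z ∈ unitDisc,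
      ‖Vop ω (tailFun ν) (fun w => f ((r : ℂ) * w)) z‖ ≤
        VSup ω (tailFun ν) f := by
  intro r hr0 hr1 z hz
  have hz1 : ‖z‖ < 1 := hz
  have hf' : DifferentiableOn ℂ f (Metric.ball (0:ℂ) 1) := by
    rwa [Stmt13Aux.unitDisc_eq_ball] at hf
  have habs_rz : ‖(r:ℂ) * z‖ = r * ‖z‖ := by
    rw [norm_mul, Complex.norm_real, Real.norm_eq_abs, abs_of_pos hr0]
  have hrz1 : ‖(r:ℂ) * z‖ < 1 := by
    rw [habs_rz]
    nlinarith [norm_nonneg z]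
  have hrz : (r:ℂ) * z ∈ unitDisc := hrz1
  have hfm : AEStronglyMeasurable f (dA.restrict unitDisc) :=
    hf.continuousOn.aestronglyMeasurable Stmt13Aux.measurableSet_unitDisc
  have hmaps : Set.MapsTo (fun ζ : ℂ => (r:ℂ) * ζ) unitDisc unitDisc := by
    intro ζ hζ
    have hζ' : ‖ζ‖ < 1 := hζ
    show ‖(r:ℂ) * ζ‖ < 1
    rw [norm_mul, Complex.norm_real, Real.norm_eq_abs, abs_of_pos hr0]
    nlinarith [norm_nonneg ζ]
  have hfrc : ContinuousOn (fun ζ : ℂ => f ((r:ℂ) * ζ)) unitDisc :=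
    hf.continuousOn.comp ((continuous_const.mul continuous_id).continuousOn) hmaps
  have hfrm : AEStronglyMeasurable (fun ζ : ℂ => f ((r:ℂ) * ζ)) (dA.restrict unitDisc) :=
    hfrc.aestronglyMeasurable Stmt13Aux.measurableSet_unitDisc
  obtain ⟨C, hC⟩ : ∃ C, ∀ x ∈ Metric.closedBall (0:ℂ) r, ‖f x‖ ≤ C := by
    apply IsCompact.exists_bound_of_continuousOn (isCompact_closedBall _ _)
    exact hf.continuousOn.mono
      (by rw [Stmt13Aux.unitDisc_eq_ball]; exact Metric.closedBall_subset_ball hr1)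
  have hfrL1 : IntegrableOn (fun ζ => ‖f ((r:ℂ) * ζ)‖ * ω ζ) unitDisc dA := by
    apply Integrable.mono' (hω.integrable.const_mul C)
    · exact (continuous_norm.comp_aestronglyMeasurable hfrm).mul
        hω.integrable.aestronglyMeasurable
    · rw [ae_restrict_iff' Stmt13Aux.measurableSet_unitDisc]
      apply Filter.Eventually.of_forall
      intro ζ hζ
      have hζ' : ‖ζ‖ < 1 := hζ
      have hmem : (r:ℂ) * ζ ∈ Metric.closedBall (0:ℂ) r := by
        rw [Metric.mem_closedBall, Complex.dist_eq, sub_zero]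
        rw [norm_mul, Complex.norm_real, Real.norm_eq_abs, abs_of_pos hr0]
        nlinarith [norm_nonneg ζ]
      have h1 := hC _ hmem
      have h2 : ‖‖f ((r:ℂ) * ζ)‖ * ω ζ‖ = ‖f ((r:ℂ)*ζ)‖ * ω ζ := by
        rw [Real.norm_eq_abs,
          abs_of_nonneg (mul_nonneg (norm_nonneg _) (hω.nonneg ζ))]
      rw [h2]
      exact mul_le_mul_of_nonneg_right h1 (hω.nonneg ζ)
  have h1 := Stmt13Aux.kernel_swap hω hν hz1 hfrm hfrL1
  have h2 := Stmt13Aux.kernel_swap hω hν hrz1 hfm hfL1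
  have key : ∫ ζ in unitDisc, f ((r:ℂ)*ζ) *
        starRingEnd ℂ (bergmanKernel (fun w => ω w * tailFun ν w) z ζ) * ((ω ζ:ℝ):ℂ) ∂dA
      = ∫ ζ in unitDisc, f ζ *
        starRingEnd ℂ (bergmanKernel (fun w => ω w * tailFun ν w) ((r:ℂ)*z) ζ) *
          ((ω ζ:ℝ):ℂ) ∂dA := by
    rw [h1, h2]
    apply tsum_congr
    intro n
    rw [Stmt13Aux.dilate hω hf' hfL1 n hr0 hr1, mul_pow]
    ring
  have hcomp : ‖Vop ω (tailFun ν) (fun w => f ((r:ℂ)*w)) z‖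
      ≤ ‖Vop ω (tailFun ν) f ((r:ℂ)*z)‖ := by
    have e1 : Vop ω (tailFun ν) (fun w => f ((r:ℂ)*w)) z
        = ((tailFun ν z : ℝ):ℂ) *
          ∫ ζ in unitDisc, f ζ *
            starRingEnd ℂ (bergmanKernel (fun w => ω w * tailFun ν w) ((r:ℂ)*z) ζ) *
              ((ω ζ:ℝ):ℂ) ∂dA := by
      rw [← key]; rfl
    have e2 : Vop ω (tailFun ν) f ((r:ℂ)*z)
        = ((tailFun ν ((r:ℂ)*z) : ℝ):ℂ) *
          ∫ ζ in unitDisc, f ζ *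
            starRingEnd ℂ (bergmanKernel (fun w => ω w * tailFun ν w) ((r:ℂ)*z) ζ) *
              ((ω ζ:ℝ):ℂ) ∂dA := rfl
    rw [e1, e2, norm_mul, norm_mul, Complex.norm_real, Complex.norm_real, Real.norm_eq_abs, Real.norm_eq_abs]
    apply mul_le_mul_of_nonneg_right _ (norm_nonneg _)
    show |tailFun ν z| ≤ |tailFun ν ((r:ℂ)*z)|
    unfold tailFun
    rw [abs_of_nonneg (Stmt13Aux.tail_nonneg hν hz1.le), abs_of_nonneg (Stmt13Aux.tail_nonneg hν hrz1.le),
      habs_rz]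
    apply Stmt13Aux.tail_antitone hν (by positivity) _ hz1.le
    exact mul_le_of_le_one_left (norm_nonneg z) hr1.le
  have hmem : ‖Vop ω (tailFun ν) f ((r:ℂ)*z)‖ ∈ VSet ω (tailFun ν) f :=
    ⟨(r:ℂ)*z, hrz, rfl⟩
  exact le_trans hcomp (le_csSup hbdd hmem)
end
end
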